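/- arXiv:2304.01463 — 6 statements merged into one kernel-verified Lean document; each statement's English description precedes it below -/
import Mathlib

section
/- The Hamming weight of the i-th row (1 ≤ i ≤ 2^n) of the n-th Kronecker power G_n = F^{⊗n} of F = [[1,0],[1,1]] over 𝔽₂ equals 2^s, where s is the number of ones in the binary representation of i−1. -/
lemma key_bit (bj bi : Bool) (mj mi : ℕ) :
    (Nat.bit bj mj &&& Nat.bit bi mi = Nat.bit bj mj) ↔
      ((bj && bi) = bj ∧ mj &&& mi = mj) := by
  rw [Nat.land_bit]
  constructor
  · intro h
    refine ⟨?_, ?_⟩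
    · have := congrArg Nat.bodd h; simpa [Nat.bodd_bit] using this
    · have := congrArg Nat.div2 h; simpa [Nat.div2_bit] using this
  · rintro ⟨h1, h2⟩; rw [h1, h2]

lemma digits_sum_bit (b : Bool) (m : ℕ) :
    (Nat.digits 2 (Nat.bit b m)).sum = b.toNat + (Nat.digits 2 m).sum := by
  rcases Nat.eq_zero_or_pos (Nat.bit b m) with h | h
  · have hb : b = false := by
      cases b <;> simp [Nat.bit_val] at h ⊢
    have hm : m = 0 := by
      cases b <;> simp [Nat.bit_val] at h <;> omega
    simp [h, hb, hm]
  · rw [Nat.digits_def' (by norm_num : 1 < 2) h]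
    simp [Nat.bit_mod_two, Nat.bit_div_two]

lemma filter_image_bit (b : Bool) (i : ℕ) (s : Finset ℕ) :
    (s.image (Nat.bit b)).filter (fun j => j &&& i = j) =
      (s.filter (fun m => Nat.bit b m &&& i = Nat.bit b m)).image (Nat.bit b) := by
  rw [Finset.filter_image]

lemma count_land (n : ℕ) : ∀ i < 2^n,
    ((Finset.range (2^n)).filter (fun j => j &&& i = j)).card
      = 2 ^ (Nat.digits 2 i).sum := by
  induction n with
  | zero =>
    intro i hi
    interval_cases i
    rw [pow_zero, Finset.range_one]
    simp [Finset.filter_singleton]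
  | succ n ih =>
    intro i hi
    set bi : Bool := i.bodd with hbi
    set mi : ℕ := i.div2 with hmi
    have hdecomp : Nat.bit bi mi = i := Nat.bit_bodd_div2 i
    have hmilt : mi < 2^n := by
      have : i / 2 < 2^n := by
        rw [pow_succ] at hi; omega
      simpa [hmi, Nat.div2_val] using this
    -- split range (2^(n+1)) into evens and odds
    have hsplit : Finset.range (2^(n+1)) =
        ((Finset.range (2^n)).image (Nat.bit false)) ∪
        ((Finset.range (2^n)).image (Nat.bit true)) := by
      ext j
      simp only [Finset.mem_union, Finset.mem_image, Finset.mem_range]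
      constructor
      · intro hj
        rcases Nat.even_or_odd j with ⟨m, hm⟩ | ⟨m, hm⟩
        · exact Or.inl ⟨m, by rw [pow_succ] at hj; omega, by simp [Nat.bit_val]; omega⟩
        · exact Or.inr ⟨m, by rw [pow_succ] at hj; omega, by simp [Nat.bit_val]; omega⟩
      · rintro (⟨m, hm, rfl⟩ | ⟨m, hm, rfl⟩) <;>
          simp [Nat.bit_val, pow_succ] <;> omega
    have hdisj : Disjoint ((Finset.range (2^n)).image (Nat.bit false))
        ((Finset.range (2^n)).image (Nat.bit true)) := by
      rw [Finset.disjoint_left]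
      intro a ha hb
      simp only [Finset.mem_image] at ha hb
      obtain ⟨m, _, rfl⟩ := ha
      obtain ⟨m', _, h⟩ := hb
      have := congrArg Nat.bodd h
      simp [Nat.bodd_bit] at this
    have hinj : ∀ b : Bool, Function.Injective (Nat.bit b) := by
      intro b x y h
      have := congrArg Nat.div2 h
      simpa [Nat.div2_bit] using this
    have hcond : ∀ (b : Bool) (m : ℕ),
        (Nat.bit b m &&& i = Nat.bit b m) ↔ ((b && bi) = b ∧ m &&& mi = m) := by
      intro b m
      rw [← hdecomp, key_bit]
    rw [hsplit, Finset.filter_union,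
      Finset.card_union_of_disjoint (Finset.disjoint_filter_filter hdisj),
      filter_image_bit, filter_image_bit,
      Finset.card_image_of_injective _ (hinj false),
      Finset.card_image_of_injective _ (hinj true)]
    have hfalse : ((Finset.range (2^n)).filter
        (fun m => Nat.bit false m &&& i = Nat.bit false m)).card
        = 2 ^ (Nat.digits 2 mi).sum := by
      rw [Finset.filter_congr (fun m _ => by rw [hcond false m]; simp :
        ∀ m ∈ Finset.range (2^n), (Nat.bit false m &&& i = Nat.bit false m)
          ↔ (m &&& mi = m))]
      exact ih mi hmilt
    have hsum : (Nat.digits 2 i).sum = bi.toNat + (Nat.digits 2 mi).sum := by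
      rw [← hdecomp, digits_sum_bit]
    cases hbicase : bi with
    | false =>
      have htrue : ((Finset.range (2^n)).filter
          (fun m => Nat.bit true m &&& i = Nat.bit true m)).card = 0 := by
        rw [Finset.card_eq_zero, Finset.filter_eq_empty_iff]
        intro m _
        rw [hcond true m, hbicase]
        simp
      rw [hfalse, htrue, hsum, hbicase]
      simp
    | true =>
      have htrue : ((Finset.range (2^n)).filter
          (fun m => Nat.bit true m &&& i = Nat.bit true m)).card
          = 2 ^ (Nat.digits 2 mi).sum := by
        rw [Finset.filter_congr (fun m _ => by rw [hcond true m, hbicase]; simp :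
          ∀ m ∈ Finset.range (2^n), (Nat.bit true m &&& i = Nat.bit true m)
            ↔ (m &&& mi = m))]
        exact ih mi hmilt
      rw [hfalse, htrue, hsum, hbicase]
      simp [pow_succ]
      ring

/-- `G_n = F^{⊗n}` for `F = [[1,0],[1,1]]` over `𝔽₂` (0-indexed):
entry `(i,j)` is `1` iff the binary digits of `j` are a subset of those of `i`. -/
def polarG (n : ℕ) : Matrix (Fin (2^n)) (Fin (2^n)) (ZMod 2) :=
  Matrix.of fun i j => if j.val &&& i.val = j.val then 1 else 0

/-- Hamming weight of a binary vector. -/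
def wt {N : ℕ} (v : Fin N → ZMod 2) : ℕ :=
  (Finset.univ.filter fun j => v j ≠ 0).card

/-- The weight of the row of `G_n` indexed by `i` (0-indexed, corresponding to row `i+1`
in 1-indexed notation) is `2^s` where `s` is the number of ones in the binary
representation of `i`. -/
theorem stmt0 (n : ℕ) (i : Fin (2^n)) :
    wt (polarG n i) = 2 ^ (Nat.digits 2 i.val).sum := by
  rw [← count_land n i.val i.isLt]
  unfold wt polarG
  apply Finset.card_bij (fun j _ => j.val)
  · intro j hj
    simp only [Finset.mem_filter, Finset.mem_univ, true_and, Matrix.of_apply] at hj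
    simp only [Finset.mem_filter, Finset.mem_range]
    refine ⟨j.isLt, ?_⟩
    by_contra h
    simp [h] at hj
  · intro a _ b _ h
    exact Fin.val_injective h
  · intro j hj
    simp only [Finset.mem_filter, Finset.mem_range] at hj
    refine ⟨⟨j, hj.1⟩, ?_, rfl⟩
    simp [Matrix.of_apply, hj.2]
end

section
/- Let G_n = F^{⊗n} with rows g_1,…,g_N (N = 2^n). For 1 ≤ m ≤ N−1 and 1 ≤ k ≤ N with k + m > N, the row g_k is invariant under the sum of cyclic shifts prescribed by row m+1: g_k = g_k ∑_{l : g_{m+1, l+1} = 1, 1 ≤ l ≤ N−1} C_N^l. -/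
/-- The `N×N` clockwise cyclic shift matrix by `j` places over `𝔽₂`. -/
def cyc (N j : ℕ) : Matrix (Fin N) (Fin N) (ZMod 2) :=
  Matrix.of fun i k => if (i.val + j) % N = k.val then 1 else 0

theorem lucas2 (a : ℕ) : ∀ b : ℕ, ((b.choose a : ZMod 2) = if a &&& b = a then 1 else 0) := by
  induction a using Nat.strong_induction_on with
  | _ a ih =>
    intro b
    rcases Nat.eq_zero_or_pos a with ha | ha
    · subst ha; simp
    · have key : (b.choose a : ZMod 2) =
          ((b % 2).choose (a % 2) : ZMod 2) * ((b / 2).choose (a / 2) : ZMod 2) := by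
        have h := @Choose.choose_modEq_choose_mod_mul_choose_div_nat b a 2 ⟨Nat.prime_two⟩
        have h2 := (ZMod.natCast_eq_natCast_iff _ _ 2).mpr h
        push_cast at h2
        exact h2
      have ih2 := ih (a / 2) (Nat.div_lt_self ha one_lt_two) (b / 2)
      rw [key, ih2]
      have h2 : (a &&& b) / 2 = a / 2 &&& b / 2 := Nat.and_div_two
      have h3 : ((a &&& b) % 2 = 1 ↔ a % 2 = 1 ∧ b % 2 = 1) := Nat.and_mod_two_eq_one
      rcases Nat.mod_two_eq_zero_or_one a with h | h <;>
        rcases Nat.mod_two_eq_zero_or_one b with h' | h' <;>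
        rw [h, h'] <;>
        by_cases hX : a / 2 &&& b / 2 = a / 2 <;>
        simp only [hX, if_true, if_false, Nat.choose_self, Nat.choose_zero_right,
          Nat.cast_one, mul_one, mul_zero, one_mul] <;>
        first
        | (rw [if_pos (by omega)]; try norm_num [Nat.choose])
        | (rw [if_neg (by omega)]; try norm_num [Nat.choose])


theorem and_two_pow_add_right (n x r : ℕ) (hx : x < 2^n) : x &&& (2^n + r) = x &&& r := by
  apply Nat.eq_of_testBit_eq
  intro i
  simp only [Nat.testBit_and]
  rcases lt_or_ge i n with hi | hi
  · rw [Nat.testBit_two_pow_add_gt hi]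
  · have hb : Nat.testBit x i = false :=
      Nat.testBit_lt_two_pow (lt_of_lt_of_le hx (Nat.pow_le_pow_right (by norm_num) hi))
    simp [hb]

theorem add_two_pow_and (n x r : ℕ) (hx : x < 2^n) (hr : r < 2^n) :
    (2^n + x) &&& (2^n + r) = 2^n + (x &&& r) := by
  have har : x &&& r < 2^n := lt_of_le_of_lt (Nat.and_le_left) hx
  apply Nat.eq_of_testBit_eq
  intro i
  rcases lt_trichotomy i n with hi | rfl | hi
  · rw [Nat.testBit_and, Nat.testBit_two_pow_add_gt hi, Nat.testBit_two_pow_add_gt hi,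
      Nat.testBit_two_pow_add_gt hi, Nat.testBit_and]
  · have h1 : Nat.testBit x i = false := Nat.testBit_lt_two_pow hx
    have h2 : Nat.testBit r i = false := Nat.testBit_lt_two_pow hr
    have h3 : Nat.testBit (x &&& r) i = false := Nat.testBit_lt_two_pow har
    rw [Nat.testBit_and, Nat.testBit_two_pow_add_eq, Nat.testBit_two_pow_add_eq,
      Nat.testBit_two_pow_add_eq, h1, h2, h3]
    rfl
  · have hpow : 2^(n+1) ≤ 2^i := Nat.pow_le_pow_right (by norm_num) hi
    have hb : ∀ y : ℕ, y < 2^n → Nat.testBit (2^n + y) i = false := by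
      intro y hy
      apply Nat.testBit_lt_two_pow
      have : 2^n + y < 2^(n+1) := by rw [pow_succ]; omega
      omega
    rw [Nat.testBit_and, hb x hx, hb r hr, hb _ har, Bool.false_and]

theorem main_sum (n m k x : ℕ) (hm : m < 2^n) (hkx : k < 2^n) (hx : x < 2^n)
    (hmk : 2^n ≤ m + k) :
    ∑ l ∈ Finset.range (2^n),
      (m.choose l : ZMod 2) * ((k.choose ((x + 2^n - l) % 2^n) : ℕ) : ZMod 2) = 0 := by
  set N := 2^n with hNdef
  have hterm : ∀ l ∈ Finset.range N,
      (m.choose l : ZMod 2) * ((k.choose ((x + N - l) % N) : ℕ) : ZMod 2) =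
      (m.choose l : ZMod 2) * ((k.choose (x + N - l) : ℕ) : ZMod 2)
        + (m.choose l : ZMod 2) * (if l ≤ x then ((k.choose (x - l) : ℕ) : ZMod 2) else 0) := by
    intro l hl
    rw [Finset.mem_range] at hl
    by_cases hlx : l ≤ x
    · have e1 : (x + N - l) % N = x - l := by
        have e : x + N - l = N + (x - l) := by omega
        rw [e, Nat.add_mod_left, Nat.mod_eq_of_lt (by omega)]
      have e2 : (k.choose (x + N - l)) = 0 := Nat.choose_eq_zero_of_lt (by omega)
      rw [e1, e2, if_pos hlx]
      push_cast
      ring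
    · have e1 : (x + N - l) % N = x + N - l := Nat.mod_eq_of_lt (by omega)
      rw [e1, if_neg hlx, mul_zero, add_zero]
  rw [Finset.sum_congr rfl hterm, Finset.sum_add_distrib]
  have hsum2 : ∑ l ∈ Finset.range N,
      (m.choose l : ZMod 2) * (if l ≤ x then ((k.choose (x - l) : ℕ) : ZMod 2) else 0)
      = (((m+k).choose x : ℕ) : ZMod 2) := by
    have h1 : ∑ l ∈ Finset.range (x+1),
        (m.choose l : ZMod 2) * (if l ≤ x then ((k.choose (x - l) : ℕ) : ZMod 2) else 0)
        = ∑ l ∈ Finset.range N,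
        (m.choose l : ZMod 2) * (if l ≤ x then ((k.choose (x - l) : ℕ) : ZMod 2) else 0) := by
      apply Finset.sum_subset (Finset.range_subset_range.mpr (show x+1 ≤ N by omega))
      intro l hl hnl
      rw [Finset.mem_range] at hl hnl
      rw [if_neg (by omega), mul_zero]
    rw [← h1, Nat.add_choose_eq, Finset.Nat.sum_antidiagonal_eq_sum_range_succ_mk]
    push_cast
    apply Finset.sum_congr rfl
    intro l hl
    rw [Finset.mem_range] at hl
    rw [if_pos (by omega)]
  have hsum1 : ∑ l ∈ Finset.range N,
      (m.choose l : ZMod 2) * ((k.choose (x + N - l) : ℕ) : ZMod 2)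
      = (((m+k).choose (x+N) : ℕ) : ZMod 2) := by
    have h1 : ∑ l ∈ Finset.range N,
        (m.choose l : ZMod 2) * ((k.choose (x + N - l) : ℕ) : ZMod 2)
        = ∑ l ∈ Finset.range (x+N+1),
        (m.choose l : ZMod 2) * ((k.choose (x + N - l) : ℕ) : ZMod 2) := by
      apply Finset.sum_subset (Finset.range_subset_range.mpr (show N ≤ x+N+1 by omega))
      intro l hl hnl
      rw [Finset.mem_range] at hl hnl
      rw [Nat.choose_eq_zero_of_lt (show m < l by omega)]
      push_cast
      ring
    rw [h1, Nat.add_choose_eq, Finset.Nat.sum_antidiagonal_eq_sum_range_succ_mk]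
    push_cast
    rfl
  rw [hsum1, hsum2]
  set r := m + k - N with hrdef
  have hr : m + k = N + r := by omega
  have hrN : r < N := by omega
  rw [lucas2 (x+N) (m+k), lucas2 x (m+k)]
  have c1 : (x &&& (m+k) = x) ↔ (x &&& r = x) := by
    rw [hr, and_two_pow_add_right n x r hx]
  have c2 : ((x+N) &&& (m+k) = x+N) ↔ (x &&& r = x) := by
    rw [hr, show x + N = N + x by ring, add_two_pow_and n x r hx hrN]
    omega
  by_cases hc : x &&& r = x
  · rw [if_pos (c1.mpr hc), if_pos (c2.mpr hc)]
    decide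
  · rw [if_neg (fun h => hc (c1.mp h)), if_neg (fun h => hc (c2.mp h))]
    decide
/-- For `1 ≤ m ≤ N−1` and a row `g_k` (0-indexed `k`, 1-indexed row `k+1`) with
`(k+1) + m > N`, the row `g_k` is invariant under the sum of cyclic shifts at the
positions of the ones of the row `g_{m+1}` (0-indexed row `m`), excluding its first
coordinate. -/
theorem stmt5 (n m : ℕ) (hm1 : 1 ≤ m) (hm2 : m ≤ 2^n - 1)
    (k : Fin (2^n)) (hk : 2^n < (k.val + 1) + m) :
    Matrix.vecMul (polarG n k)
      (∑ l ∈ Finset.univ.filter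
          (fun l : Fin (2^n) => 1 ≤ l.val ∧
            polarG n ⟨m, by have h0 : (0:ℕ) < 2^n := Nat.two_pow_pos n; omega⟩ l = 1),
        cyc (2^n) l.val)
      = polarG n k := by
  have hN : 0 < 2^n := Nat.two_pow_pos n
  have hm : m < 2^n := by omega
  funext x
  -- the shifted-row function
  set f : Fin (2^n) → ZMod 2 :=
    fun l => polarG n k ⟨(x.val + (2^n) - l.val) % (2^n), Nat.mod_lt _ hN⟩ with hf
  -- Step 1: vecMul commutes with the sum, and each vecMul against cyc is a shift
  have step1 : ∀ (s : Finset (Fin (2^n))),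
      Matrix.vecMul (polarG n k) (∑ l ∈ s, cyc (2^n) l.val) x
        = ∑ l ∈ s, Matrix.vecMul (polarG n k) (cyc (2^n) l.val) x := by
    intro s
    simp only [Matrix.vecMul, dotProduct, Matrix.sum_apply, Finset.mul_sum]
    rw [Finset.sum_comm]
  have hcyc : ∀ l : Fin (2^n), Matrix.vecMul (polarG n k) (cyc (2^n) l.val) x = f l := by
    intro l
    have hlt : (x.val + (2^n) - l.val) % (2^n) < (2^n) := Nat.mod_lt _ hN
    rw [Matrix.vecMul, dotProduct]
    rw [Finset.sum_eq_single (⟨(x.val + (2^n) - l.val) % (2^n), hlt⟩ : Fin (2^n))]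
    · have e1 : ((x.val + (2^n) - l.val) % (2^n) + l.val) % (2^n) = x.val := by
        rw [Nat.mod_add_mod, show x.val + (2^n) - l.val + l.val = x.val + (2^n) by omega,
          Nat.add_mod_right, Nat.mod_eq_of_lt x.isLt]
      show polarG n k _ * cyc (2^n) l.val _ x = f l
      rw [cyc, Matrix.of_apply, if_pos e1, mul_one, hf]
    · intro i _ hne
      show polarG n k i * cyc (2^n) l.val i x = 0
      rw [cyc, Matrix.of_apply, if_neg, mul_zero]
      intro h
      apply hne
      apply Fin.ext
      show i.val = (x.val + (2^n) - l.val) % (2^n)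
      have e2 : (i.val + l.val + ((2^n) - l.val)) % (2^n) = (x.val + ((2^n) - l.val)) % (2^n) := by
        rw [← h, Nat.mod_add_mod]
      rwa [show i.val + l.val + ((2^n) - l.val) = i.val + (2^n) by omega,
        Nat.add_mod_right, Nat.mod_eq_of_lt i.isLt,
        show x.val + ((2^n) - l.val) = x.val + (2^n) - l.val by omega] at e2
    · intro habs
      exact absurd (Finset.mem_univ _) habs
  rw [step1, Finset.sum_congr rfl (fun l _ => hcyc l)]
  -- Step 2: rewrite the index set
  have hS0 : (Finset.univ.filter
        (fun l : Fin (2^n) => 1 ≤ l.val ∧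
          polarG n ⟨m, by have h0 : (0:ℕ) < 2^n := Nat.two_pow_pos n; omega⟩ l = 1))
      = (Finset.univ.filter (fun l : Fin (2^n) => l.val &&& m = l.val)).erase ⟨0, hN⟩ := by
    ext l
    rw [Finset.mem_filter, Finset.mem_erase, Finset.mem_filter]
    simp only [Finset.mem_univ, true_and, polarG,
      Matrix.of_apply]
    constructor
    · rintro ⟨h1, h2⟩
      constructor
      · intro h0
        rw [h0] at h1
        simp at h1
      · by_contra hc
        rw [if_neg hc] at h2
        exact zero_ne_one h2
    · rintro ⟨h1, h2⟩
      refine ⟨?_, by rw [if_pos h2]⟩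
      rcases Nat.eq_zero_or_pos l.val with h0 | h0
      · exact absurd (Fin.ext h0) h1
      · exact h0
  rw [hS0, Finset.sum_erase_eq_sub (by
      simp only [Finset.mem_filter, Finset.mem_univ, true_and]
      exact Nat.zero_and m)]
  -- Step 3: the full subset-sum vanishes
  have hmain : ∑ l ∈ Finset.univ.filter (fun l : Fin (2^n) => l.val &&& m = l.val), f l = 0 := by
    rw [Finset.sum_filter]
    have hcong : ∀ l : Fin (2^n),
        (if l.val &&& m = l.val then f l else 0)
        = (m.choose l.val : ZMod 2) *
          ((k.val.choose ((x.val + (2^n) - l.val) % (2^n)) : ℕ) : ZMod 2) := by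
      intro l
      have hfl : f l = ((k.val.choose ((x.val + (2^n) - l.val) % (2^n)) : ℕ) : ZMod 2) := by
        rw [hf, lucas2]
        rfl
      rw [hfl, lucas2 l.val m, ite_mul, one_mul, zero_mul]
    rw [Finset.sum_congr rfl (fun l _ => hcong l)]
    rw [Fin.sum_univ_eq_sum_range
      (fun l => (m.choose l : ZMod 2) * ((k.val.choose ((x.val + (2^n) - l) % (2^n)) : ℕ) : ZMod 2))]
    exact main_sum n m k.val x.val hm k.isLt x.isLt (by omega)
  rw [hmain]
  -- Step 4: the erased term is the row itself
  have e0 : (⟨(x.val + 2^n - ((⟨0, hN⟩ : Fin (2^n)).val)) % 2^n, Nat.mod_lt _ hN⟩ : Fin (2^n))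
      = x := by
    apply Fin.ext
    show (x.val + 2^n - 0) % 2^n = x.val
    rw [show x.val + 2^n - 0 = x.val + 2^n from by omega, Nat.add_mod_right,
      Nat.mod_eq_of_lt x.isLt]
  rw [e0, zero_sub, CharTwo.neg_eq]
end

section
/- Let G_n = F^{⊗n}, N = 2^n, and let v be a nonzero binary vector of length N whose first nonzero entry is in position i. Then for any odd-cardinality set S of distinct shift amounts in {0, 1, …, N−1}, w((v G_n) ∑_{l ∈ S} C_N^l) ≥ w(g_i), where g_i is the i-th row of G_n and w denotes Hamming weight. -/
namespace Stmt9Aux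

open Matrix Finset

lemma land_eq_left_iff (x y : ℕ) :
    x &&& y = x ↔ ∀ t, x.testBit t = true → y.testBit t = true := by
  constructor
  · intro h t ht
    have h2 := congrArg (fun z => z.testBit t) h
    simp only [Nat.testBit_and, ht, Bool.true_and] at h2
    exact h2
  · intro h
    apply Nat.eq_of_testBit_eq
    intro t
    rw [Nat.testBit_and]
    cases hx : x.testBit t with
    | false => simp
    | true => simp [h t hx]

lemma testBit_lt (x t n : ℕ) (hx : x < 2^n) (ht : n ≤ t) : x.testBit t = false := by
  apply Nat.testBit_lt_two_pow
  exact lt_of_lt_of_le hx (Nat.pow_le_pow_right (by norm_num) ht)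

lemma testBit_true_lt (x t n : ℕ) (hx : x < 2^n) (h : x.testBit t = true) : t < n := by
  by_contra hc
  rw [testBit_lt x t n hx (by omega)] at h
  exact Bool.false_ne_true h

lemma testBit_add_pow_lt (a t n : ℕ) (ht : t < n) : (a + 2^n).testBit t = a.testBit t := by
  rw [add_comm, Nat.testBit_two_pow_add_gt ht]

lemma testBit_add_pow_eq (a n : ℕ) (ha : a < 2^n) : (a + 2^n).testBit n = true := by
  rw [add_comm, Nat.testBit_two_pow_add_eq, testBit_lt a n n ha le_rfl]
  rfl

lemma land_add_pow_iff {n a b : ℕ} (hb : b < 2^n) :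
    b &&& (a + 2^n) = b ↔ b &&& a = b := by
  rw [land_eq_left_iff, land_eq_left_iff]
  constructor
  · intro h t ht
    have htn := testBit_true_lt b t n hb ht
    have := h t ht
    rwa [testBit_add_pow_lt a t n htn] at this
  · intro h t ht
    have htn := testBit_true_lt b t n hb ht
    rw [testBit_add_pow_lt a t n htn]
    exact h t ht

lemma land_add_pow_add_pow_iff {n a b : ℕ} (ha : a < 2^n) (hb : b < 2^n) :
    (b + 2^n) &&& (a + 2^n) = b + 2^n ↔ b &&& a = b := by
  rw [land_eq_left_iff, land_eq_left_iff]
  constructor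
  · intro h t ht
    have htn := testBit_true_lt b t n hb ht
    have h2 : (b + 2^n).testBit t = true := by rw [testBit_add_pow_lt b t n htn]; exact ht
    have := h t h2
    rwa [testBit_add_pow_lt a t n htn] at this
  · intro h t ht
    rcases lt_trichotomy t n with h1 | h1 | h1
    · rw [testBit_add_pow_lt b t n h1] at ht
      rw [testBit_add_pow_lt a t n h1]
      exact h t ht
    · subst h1
      exact testBit_add_pow_eq a t ha
    · exfalso
      have hf : (b + 2^n).testBit t = false := by
        apply testBit_lt _ _ (n+1)
        · have : (2:ℕ)^(n+1) = 2^n + 2^n := by rw [pow_succ]; omega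
          omega
        · omega
      rw [hf] at ht
      exact Bool.false_ne_true ht

/-! ### weight lemmas -/

lemma wt_eq {N : ℕ} (v : Fin N → ZMod 2) : wt v = ∑ j, if v j = 0 then 0 else 1 := by
  rw [wt, Finset.card_filter]
  exact Finset.sum_congr rfl fun j _ => by by_cases h : v j = 0 <;> simp [h]

lemma wt_add_le {N : ℕ} (a b : Fin N → ZMod 2) : wt (a + b) ≤ wt a + wt b := by
  rw [wt_eq, wt_eq, wt_eq, ← Finset.sum_add_distrib]
  apply Finset.sum_le_sum
  intro j _
  have hd : ∀ x y : ZMod 2, (if x + y = 0 then 0 else 1 : ℕ)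
      ≤ (if x = 0 then 0 else 1) + (if y = 0 then 0 else 1) := by decide
  exact hd (a j) (b j)

def lo (n : ℕ) (j : Fin (2^n)) : Fin (2^(n+1)) :=
  ⟨j.val, by
    have := j.isLt
    have h : (2:ℕ)^(n+1) = 2^n + 2^n := by rw [pow_succ]; omega
    omega⟩

def hi (n : ℕ) (j : Fin (2^n)) : Fin (2^(n+1)) :=
  ⟨j.val + 2^n, by
    have := j.isLt
    have h : (2:ℕ)^(n+1) = 2^n + 2^n := by rw [pow_succ]; omega
    omega⟩

lemma sum_split {M : Type*} [AddCommMonoid M] (n : ℕ) (f : Fin (2^(n+1)) → M) :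
    ∑ j, f j = (∑ j, f (lo n j)) + ∑ j, f (hi n j) := by
  have e : 2^(n+1) = 2^n + 2^n := by rw [pow_succ]; omega
  rw [Fintype.sum_equiv (finCongr e) (fun j => f j) (fun j => f (finCongr e.symm j))
    (fun x => by simp)]
  rw [Fin.sum_univ_add]
  refine congrArg₂ (· + ·) ?_ ?_
  · exact Finset.sum_congr rfl fun j _ => congrArg f (Fin.ext rfl)
  · exact Finset.sum_congr rfl fun j _ =>
      congrArg f (Fin.ext (by show 2^n + j.val = j.val + 2^n; omega))

lemma wt_split (n : ℕ) (c : Fin (2^(n+1)) → ZMod 2) :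
    wt c = wt (fun j => c (lo n j)) + wt (fun j => c (hi n j)) := by
  rw [wt_eq, wt_eq, wt_eq, sum_split n]

lemma polarG_lo_lo (n : ℕ) (j k : Fin (2^n)) :
    polarG (n+1) (lo n j) (lo n k) = polarG n j k := rfl

lemma polarG_lo_hi (n : ℕ) (j k : Fin (2^n)) :
    polarG (n+1) (lo n j) (hi n k) = 0 := by
  have h1 : (k.val + 2^n) &&& j.val ≤ j.val := Nat.and_le_right
  have hj := j.isLt
  simp only [polarG, Matrix.of_apply, lo, hi]
  rw [if_neg]
  omega

lemma polarG_hi_lo (n : ℕ) (j k : Fin (2^n)) :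
    polarG (n+1) (hi n j) (lo n k) = polarG n j k := by
  simp only [polarG, Matrix.of_apply, lo, hi]
  exact if_congr (land_add_pow_iff k.isLt) rfl rfl

lemma polarG_hi_hi (n : ℕ) (j k : Fin (2^n)) :
    polarG (n+1) (hi n j) (hi n k) = polarG n j k := by
  simp only [polarG, Matrix.of_apply, lo, hi]
  exact if_congr (land_add_pow_add_pow_iff j.isLt k.isLt) rfl rfl

lemma vecMul_apply' {N : ℕ} (v : Fin N → ZMod 2) (M : Matrix (Fin N) (Fin N) (ZMod 2))
    (k : Fin N) : Matrix.vecMul v M k = ∑ j, v j * M j k := by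
  simp [Matrix.vecMul, dotProduct]

lemma key : ∀ (n : ℕ) (v : Fin (2^n) → ZMod 2) (i : Fin (2^n)), v i ≠ 0 →
    (∀ j, j < i → v j = 0) → wt (polarG n i) ≤ wt (Matrix.vecMul v (polarG n)) := by
  intro n
  induction n with
  | zero =>
    intro v i hvi _
    have hval : ∀ x : Fin (2^0), x = i := by
      intro x; apply Fin.ext; have := x.isLt; have := i.isLt
      simp only [pow_zero] at *; omega
    have hu : (Finset.univ : Finset (Fin (2^0))) = {i} :=
      Finset.eq_singleton_iff_unique_mem.mpr ⟨Finset.mem_univ i, fun x _ => hval x⟩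
    have h1 : ∀ w : Fin (2^0) → ZMod 2, w i ≠ 0 → wt w = 1 := by
      intro w hw
      rw [wt, hu, Finset.filter_singleton, if_pos hw, Finset.card_singleton]
    have ha : wt (polarG 0 i) = 1 := h1 _ (by simp [polarG, Nat.and_self])
    have hb : wt (Matrix.vecMul v (polarG 0)) = 1 := by
      apply h1
      rw [vecMul_apply', hu, Finset.sum_singleton]
      simpa [polarG, Nat.and_self] using hvi
    omega
  | succ n ih =>
    intro v i hvi hfirst
    have hpow : (2:ℕ)^(n+1) = 2^n + 2^n := by rw [pow_succ]; omega
    set v0 : Fin (2^n) → ZMod 2 := fun j => v (lo n j) with hv0def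
    set v1 : Fin (2^n) → ZMod 2 := fun j => v (hi n j) with hv1def
    have claimA : ∀ k, Matrix.vecMul v (polarG (n+1)) (lo n k)
        = Matrix.vecMul (v0 + v1) (polarG n) k := by
      intro k
      rw [vecMul_apply', vecMul_apply',
        sum_split n (fun j => v j * polarG (n+1) j (lo n k))]
      have e1 : ∑ j, v (lo n j) * polarG (n+1) (lo n j) (lo n k)
          = ∑ j, v0 j * polarG n j k :=
        Finset.sum_congr rfl fun j _ => by rw [polarG_lo_lo]
      have e2 : ∑ j, v (hi n j) * polarG (n+1) (hi n j) (lo n k)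
          = ∑ j, v1 j * polarG n j k :=
        Finset.sum_congr rfl fun j _ => by rw [polarG_hi_lo]
      have e3 : ∑ j, (v0 + v1) j * polarG n j k
          = (∑ j, v0 j * polarG n j k) + ∑ j, v1 j * polarG n j k := by
        rw [← Finset.sum_add_distrib]
        exact Finset.sum_congr rfl fun j _ => by simp [Pi.add_apply, add_mul]
      rw [e1, e2, e3]
    have claimB : ∀ k, Matrix.vecMul v (polarG (n+1)) (hi n k)
        = Matrix.vecMul v1 (polarG n) k := by
      intro k
      rw [vecMul_apply', vecMul_apply',
        sum_split n (fun j => v j * polarG (n+1) j (hi n k))]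
      have h1 : ∑ j, v (lo n j) * polarG (n+1) (lo n j) (hi n k) = 0 :=
        Finset.sum_eq_zero fun j _ => by rw [polarG_lo_hi, mul_zero]
      rw [h1, zero_add]
      exact Finset.sum_congr rfl fun j _ => by rw [polarG_hi_hi]
    have hwt : wt (Matrix.vecMul v (polarG (n+1)))
        = wt (Matrix.vecMul (v0+v1) (polarG n)) + wt (Matrix.vecMul v1 (polarG n)) := by
      rw [wt_split n]
      congr 1
      · rw [show (fun j => Matrix.vecMul v (polarG (n+1)) (lo n j))
            = Matrix.vecMul (v0+v1) (polarG n) from funext claimA]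
      · rw [show (fun j => Matrix.vecMul v (polarG (n+1)) (hi n j))
            = Matrix.vecMul v1 (polarG n) from funext claimB]
    by_cases hcase : i.val < 2^n
    · set i0 : Fin (2^n) := ⟨i.val, hcase⟩ with hi0def
      have hloeq : lo n i0 = i := Fin.ext rfl
      have hg : wt (polarG (n+1) i) = wt (polarG n i0) := by
        rw [wt_split n]
        have h1 : (fun k => polarG (n+1) i (lo n k)) = polarG n i0 := by
          funext k
          rw [← hloeq, polarG_lo_lo]
        have h2 : wt (fun k => polarG (n+1) i (hi n k)) = 0 := by
          have h3 : (fun k => polarG (n+1) i (hi n k)) = fun _ => (0 : ZMod 2) := by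
            funext k
            rw [← hloeq, polarG_lo_hi]
          rw [h3]
          simp [wt]
        rw [h1, h2, add_zero]
      have hv0i : v0 i0 ≠ 0 := by
        show v (lo n i0) ≠ 0
        rw [hloeq]; exact hvi
      have hv0first : ∀ j, j < i0 → v0 j = 0 := by
        intro j hj
        apply hfirst
        rw [Fin.lt_def] at hj ⊢
        exact hj
      have h3 := ih v0 i0 hv0i hv0first
      have h4 : Matrix.vecMul v0 (polarG n)
          = Matrix.vecMul (v0+v1) (polarG n) + Matrix.vecMul v1 (polarG n) := by
        have hveq : v0 = (v0 + v1) + v1 := by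
          funext j
          have hself : v1 j + v1 j = 0 := by
            have h5 : (v1 j + v1 j) = 2 * v1 j := by ring
            rw [h5]
            have h2 : (2 : ZMod 2) = 0 := by decide
            rw [h2, zero_mul]
          simp only [Pi.add_apply]
          rw [add_assoc, hself, add_zero]
        rw [← Matrix.add_vecMul, ← hveq]
      calc wt (polarG (n+1) i) = wt (polarG n i0) := hg
        _ ≤ wt (Matrix.vecMul v0 (polarG n)) := h3
        _ ≤ wt (Matrix.vecMul (v0+v1) (polarG n)) + wt (Matrix.vecMul v1 (polarG n)) := by
            rw [h4]; exact wt_add_le _ _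
        _ = wt (Matrix.vecMul v (polarG (n+1))) := hwt.symm
    · have hval : i.val - 2^n < 2^n := by have := i.isLt; omega
      set i0 : Fin (2^n) := ⟨i.val - 2^n, hval⟩ with hi0def
      have hhieq : hi n i0 = i := by
        apply Fin.ext
        show (i.val - 2^n) + 2^n = i.val
        omega
      have hg : wt (polarG (n+1) i) = wt (polarG n i0) + wt (polarG n i0) := by
        rw [wt_split n]
        congr 1
        · rw [show (fun k => polarG (n+1) i (lo n k)) = polarG n i0 from
            funext fun k => by rw [← hhieq, polarG_hi_lo]]
        · rw [show (fun k => polarG (n+1) i (hi n k)) = polarG n i0 from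
            funext fun k => by rw [← hhieq, polarG_hi_hi]]
      have hv0zero : v0 + v1 = v1 := by
        funext j
        have hz : v0 j = 0 := by
          apply hfirst
          rw [Fin.lt_def]
          show j.val < i.val
          have := j.isLt
          omega
        simp [Pi.add_apply, hz]
      have hv1i : v1 i0 ≠ 0 := by
        show v (hi n i0) ≠ 0
        rw [hhieq]; exact hvi
      have hi0val : i0.val = i.val - 2^n := rfl
      have hv1first : ∀ j, j < i0 → v1 j = 0 := by
        intro j hj
        apply hfirst
        rw [Fin.lt_def, hi0val] at hj
        rw [Fin.lt_def]
        show j.val + 2^n < i.val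
        omega
      have h3 := ih v1 i0 hv1i hv1first
      rw [hwt, hv0zero, hg]
      exact Nat.add_le_add h3 h3

lemma land_mod_div (j k : ℕ) :
    k &&& j = k ↔ (k % 2 &&& j % 2 = k % 2 ∧ k / 2 &&& j / 2 = k / 2) := by
  rw [land_eq_left_iff, land_eq_left_iff, land_eq_left_iff]
  constructor
  · intro h
    constructor
    · intro t ht
      match t with
      | 0 =>
        rw [Nat.testBit_zero] at ht ⊢
        have hk : k % 2 = 1 := by
          by_contra hc
          simp [Nat.mod_mod_of_dvd, Nat.mod_two_eq_zero_or_one] at ht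
          omega
        have := h 0 (by rw [Nat.testBit_zero]; simp [hk])
        rw [Nat.testBit_zero] at this
        simpa [Nat.mod_mod_of_dvd] using this
      | (t+1) =>
        exfalso
        have : k % 2 < 2 := Nat.mod_lt _ (by norm_num)
        have h2 : (k % 2).testBit (t+1) = false := by
          apply Nat.testBit_lt_two_pow
          calc k % 2 < 2 := this
          _ ≤ 2^(t+1) := by exact Nat.le_self_pow (by omega) 2
        rw [h2] at ht
        exact Bool.false_ne_true ht
    · intro t ht
      rw [Nat.testBit_div_two] at ht ⊢
      exact h (t+1) ht
  · rintro ⟨h0, h1⟩ t ht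
    match t with
    | 0 =>
      rw [Nat.testBit_zero] at ht ⊢
      have hk : k % 2 = 1 := by
        by_contra hc
        simp at ht
        omega
      have := h0 0 (by rw [Nat.testBit_zero]; simp [Nat.mod_mod_of_dvd, hk])
      rw [Nat.testBit_zero] at this
      simp [Nat.mod_mod_of_dvd] at this
      simp [this]
    | (t+1) =>
      rw [← Nat.testBit_div_two] at ht ⊢
      exact h1 t ht

lemma choose_zmod2 (j : ℕ) : ∀ k : ℕ, ((j.choose k : ZMod 2)) = if k &&& j = k then 1 else 0 := by
  induction j using Nat.strong_induction_on with
  | _ j ih =>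
  intro k
  rcases Nat.eq_zero_or_pos j with hj | hj
  · subst hj
    rcases Nat.eq_zero_or_pos k with hk | hk
    · subst hk; simp
    · rw [Nat.choose_eq_zero_of_lt hk, if_neg]
      · simp
      · have : k &&& 0 = 0 := Nat.and_zero k
        omega
  · haveI : Fact (Nat.Prime 2) := ⟨Nat.prime_two⟩
    have hl := Choose.choose_modEq_choose_mod_mul_choose_div_nat (p := 2) (n := j) (k := k)
    have hcast : ((j.choose k : ZMod 2)) =
        (((j % 2).choose (k % 2) * ((j / 2).choose (k / 2)) : ℕ) : ZMod 2) :=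
      (ZMod.natCast_eq_natCast_iff _ _ _).mpr hl
    rw [hcast]
    push_cast
    rw [ih (j / 2) (by omega) (k / 2)]
    have hsmall : (((j % 2).choose (k % 2) : ZMod 2)) =
        if k % 2 &&& j % 2 = k % 2 then 1 else 0 := by
      have hj2 : j % 2 = 0 ∨ j % 2 = 1 := by omega
      have hk2 : k % 2 = 0 ∨ k % 2 = 1 := by omega
      rcases hj2 with h | h <;> rcases hk2 with h' | h' <;> rw [h, h'] <;> simp
    rw [hsmall]
    have hiff := land_mod_div j k
    by_cases h0 : k % 2 &&& j % 2 = k % 2 <;> by_cases h1 : k / 2 &&& j / 2 = k / 2 <;>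
      simp [h0, h1, hiff]


/-! ### Part 4: the algebraic reduction -/

section Part4
open Polynomial

variable (n : ℕ)

def CC (n : ℕ) : Matrix (Fin (2^n)) (Fin (2^n)) (ZMod 2) := cyc (2^n) 1

def Y (n : ℕ) : Matrix (Fin (2^n)) (Fin (2^n)) (ZMod 2) := 1 + CC n

def z (n : ℕ) : Fin (2^n) := ⟨0, by positivity⟩

lemma Npos : 0 < 2^n := by positivity

lemma zval : (z n).val = 0 := rfl

lemma cyc_zero : cyc (2^n) 0 = 1 := by
  ext i k
  simp only [cyc, Matrix.of_apply, Matrix.one_apply, Nat.add_zero]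
  refine if_congr ?_ rfl rfl
  rw [Nat.mod_eq_of_lt i.isLt]
  exact ⟨fun h => Fin.ext h, fun h => congrArg Fin.val h⟩

lemma cyc_succ (l : ℕ) : cyc (2^n) (l+1) = cyc (2^n) l * cyc (2^n) 1 := by
  ext i k
  rw [Matrix.mul_apply]
  have hlt : (i.val + l) % 2^n < 2^n := Nat.mod_lt _ (Npos n)
  rw [Finset.sum_eq_single (⟨(i.val + l) % 2^n, hlt⟩ : Fin (2^n))]
  · simp only [cyc, Matrix.of_apply, if_true, one_mul]
    refine if_congr ?_ rfl rfl
    rw [Nat.mod_add_mod, Nat.add_assoc]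
  · intro b _ hb
    simp only [cyc, Matrix.of_apply]
    rw [if_neg, zero_mul]
    intro h
    exact hb (Fin.ext h.symm)
  · intro h
    exact absurd (Finset.mem_univ _) h

lemma cyc_pow (l : ℕ) : cyc (2^n) l = (CC n)^l := by
  induction l with
  | zero => rw [pow_zero]; exact cyc_zero n
  | succ l ih => rw [cyc_succ n l, ih, pow_succ]; rfl

lemma cyc_full : cyc (2^n) (2^n) = 1 := by
  ext i k
  simp only [cyc, Matrix.of_apply, Matrix.one_apply]
  refine if_congr ?_ rfl rfl
  rw [Nat.add_mod_right, Nat.mod_eq_of_lt i.isLt]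
  exact ⟨fun h => Fin.ext h, fun h => congrArg Fin.val h⟩

lemma matAddSelf (M : Matrix (Fin (2^n)) (Fin (2^n)) (ZMod 2)) : M + M = 0 := by
  ext i k
  simp only [Matrix.add_apply, Matrix.zero_apply]
  have h : (M i k + M i k) = 2 * M i k := by ring
  rw [h, show (2:ZMod 2) = 0 from by decide, zero_mul]

lemma Y_pow_two_pow (s : ℕ) : (Y n)^(2^s) = 1 + (CC n)^(2^s) := by
  induction s with
  | zero =>
    rw [show (2:ℕ)^0 = 1 from rfl, pow_one, pow_one]
    rfl
  | succ s ih =>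
    rw [show (2:ℕ)^(s+1) = 2^s * 2 from by rw [pow_succ], pow_mul, pow_mul, ih]
    set D := (CC n)^(2^s) with hD
    calc (1 + D)^2 = (1 + D) * (1 + D) := sq (1 + D)
      _ = 1*(1+D) + D*(1+D) := add_mul 1 D (1+D)
      _ = (1 + D) + (D*1 + D*D) := by rw [one_mul, mul_add]
      _ = 1 + ((D + D) + D*D) := by rw [mul_one, add_assoc, ← add_assoc D D (D*D)]
      _ = 1 + D^2 := by rw [matAddSelf n D, zero_add, sq]

lemma Y_pow_N : (Y n)^(2^n) = 0 := by
  rw [Y_pow_two_pow n n, ← cyc_pow, cyc_full]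
  exact matAddSelf n 1

lemma aeval_trunc (p : (ZMod 2)[X]) :
    (Polynomial.aeval (Y n)) p = ∑ k : Fin (2^n), p.coeff k • (Y n)^(k:ℕ) := by
  induction p using Polynomial.induction_on' with
  | add p q hp hq =>
    rw [_root_.map_add, hp, hq, ← Finset.sum_add_distrib]
    exact Finset.sum_congr rfl fun k _ => by rw [Polynomial.coeff_add, add_smul]
  | monomial m a =>
    rw [Polynomial.aeval_monomial]
    by_cases hm : m < 2^n
    · rw [Finset.sum_eq_single (⟨m, hm⟩ : Fin (2^n))]
      · rw [Polynomial.coeff_monomial, if_pos rfl, Algebra.smul_def]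
      · intro b _ hb
        rw [Polynomial.coeff_monomial, if_neg, zero_smul]
        intro h
        exact hb (Fin.ext h.symm)
      · intro h
        exact absurd (Finset.mem_univ _) h
    · have hY : (Y n)^m = 0 := by
        obtain ⟨d, rfl⟩ : ∃ d, m = 2^n + d := ⟨m - 2^n, by omega⟩
        rw [pow_add, Y_pow_N, zero_mul]
      rw [hY, mul_zero]
      symm
      apply Finset.sum_eq_zero
      intro b _
      rw [Polynomial.coeff_monomial, if_neg (by have := b.isLt; omega), zero_smul]

lemma mul_natCast_apply (A : Matrix (Fin (2^n)) (Fin (2^n)) (ZMod 2)) (c : ℕ)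
    (i k : Fin (2^n)) :
    (A * (c : Matrix (Fin (2^n)) (Fin (2^n)) (ZMod 2))) i k = A i k * (c : ZMod 2) := by
  have h : (c : Matrix (Fin (2^n)) (Fin (2^n)) (ZMod 2))
      = c • (1 : Matrix (Fin (2^n)) (Fin (2^n)) (ZMod 2)) := by
    rw [nsmul_eq_mul, mul_one]
  rw [h, Matrix.mul_smul, Matrix.mul_one, Matrix.smul_apply, nsmul_eq_mul, mul_comm]

lemma Y_pow_entry (j k : Fin (2^n)) :
    ((Y n)^(j:ℕ)) (z n) k = ((j:ℕ).choose k.val : ZMod 2) := by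
  have hY : Y n = CC n + 1 := add_comm 1 (CC n)
  rw [hY, (Commute.one_right (CC n)).add_pow]
  rw [Matrix.sum_apply]
  have hterm : ∀ m ∈ Finset.range ((j:ℕ)+1),
      ((CC n)^m * (1 : Matrix (Fin (2^n)) (Fin (2^n)) (ZMod 2))^((j:ℕ)-m)
        * (((j:ℕ).choose m : ℕ) : Matrix (Fin (2^n)) (Fin (2^n)) (ZMod 2))) (z n) k
      = (if m % 2^n = k.val then 1 else 0) * (((j:ℕ).choose m : ℕ) : ZMod 2) := by
    intro m _
    rw [one_pow, mul_one, mul_natCast_apply, ← cyc_pow]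
    simp only [cyc, Matrix.of_apply, zval, Nat.zero_add]
  rw [Finset.sum_congr rfl hterm]
  rw [Finset.sum_eq_single k.val]
  · rw [Nat.mod_eq_of_lt k.isLt, if_pos rfl, one_mul]
  · intro a ha hne
    rw [Finset.mem_range] at ha
    have halt : a < 2^n := lt_of_lt_of_le ha j.isLt
    rw [Nat.mod_eq_of_lt (by omega), if_neg hne, zero_mul]
  · intro hk
    rw [Finset.mem_range] at hk
    rw [Nat.choose_eq_zero_of_lt (by omega), Nat.cast_zero, mul_zero]

lemma Y_pow_row (j k : Fin (2^n)) : ((Y n)^(j:ℕ)) (z n) k = polarG n j k := by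
  rw [Y_pow_entry, choose_zmod2]
  rfl

lemma vecMul_G (v : Fin (2^n) → ZMod 2) :
    Matrix.vecMul v (polarG n) = fun k => (∑ j : Fin (2^n), v j • (Y n)^(j:ℕ)) (z n) k := by
  funext k
  rw [vecMul_apply', Matrix.sum_apply]
  exact Finset.sum_congr rfl fun j _ => by
    rw [Matrix.smul_apply, Y_pow_row, smul_eq_mul]

lemma sum_smul_eq_aeval (w : Fin (2^n) → ZMod 2) :
    ∑ j : Fin (2^n), w j • (Y n)^(j:ℕ)
      = Polynomial.aeval (Y n) (∑ j : Fin (2^n), Polynomial.C (w j) * Polynomial.X^(j:ℕ)) := by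
  rw [_root_.map_sum]
  exact Finset.sum_congr rfl fun j _ => by
    rw [_root_.map_mul, Polynomial.aeval_C, _root_.map_pow, Polynomial.aeval_X, Algebra.smul_def]

lemma T_eq (S : Finset ℕ) : (∑ l ∈ S, cyc (2^n) l)
    = Polynomial.aeval (Y n) (∑ l ∈ S, (1 + Polynomial.X : (ZMod 2)[X])^l) := by
  rw [_root_.map_sum]
  refine Finset.sum_congr rfl fun l _ => ?_
  rw [_root_.map_pow, _root_.map_add, _root_.map_one, Polynomial.aeval_X]
  have h1 : (1 : Matrix (Fin (2^n)) (Fin (2^n)) (ZMod 2)) + Y n = CC n := by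
    rw [Y, ← add_assoc, matAddSelf n 1, zero_add]
  rw [h1, cyc_pow]

lemma coeff_pv (v : Fin (2^n) → ZMod 2) (a : ℕ) (h : a < 2^n) :
    (∑ j : Fin (2^n), Polynomial.C (v j) * Polynomial.X^(j:ℕ)).coeff a = v ⟨a, h⟩ := by
  rw [Polynomial.finset_sum_coeff]
  rw [Finset.sum_eq_single (⟨a, h⟩ : Fin (2^n))]
  · rw [Polynomial.coeff_C_mul, Polynomial.coeff_X_pow, if_pos rfl, mul_one]
  · intro b _ hb
    rw [Polynomial.coeff_C_mul, Polynomial.coeff_X_pow, if_neg, mul_zero]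
    intro h2
    exact hb (Fin.ext h2.symm)
  · intro hmem
    exact absurd (Finset.mem_univ _) hmem

lemma coeff_pT_zero (S : Finset ℕ) (hodd : Odd S.card) :
    (∑ l ∈ S, (1 + Polynomial.X : (ZMod 2)[X])^l).coeff 0 = 1 := by
  rw [Polynomial.finset_sum_coeff]
  have h1 : ∀ l ∈ S, ((1 + Polynomial.X : (ZMod 2)[X])^l).coeff 0 = 1 := by
    intro l _
    rw [Polynomial.coeff_zero_eq_eval_zero]
    simp
  rw [Finset.sum_congr rfl h1, Finset.sum_const, nsmul_eq_mul, mul_one]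
  obtain ⟨m, hm⟩ := hodd
  rw [hm]
  push_cast
  rw [show (2 : ZMod 2) = 0 from by decide]
  ring

end Part4

end Stmt9Aux


/-- If the first nonzero entry of `v` is in position `i`, then for any odd-cardinality
set `S` of distinct shift amounts in `{0,…,N−1}`,
`w((v G_n) ∑_{l∈S} C_N^l) ≥ w(g_i)`. -/
theorem stmt9 (n : ℕ) (v : Fin (2^n) → ZMod 2) (i : Fin (2^n))
    (hvi : v i ≠ 0) (hfirst : ∀ j : Fin (2^n), j < i → v j = 0)
    (S : Finset ℕ) (hS : ∀ s ∈ S, s ≤ 2^n - 1) (hodd : Odd S.card) :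
    wt (Matrix.vecMul (Matrix.vecMul v (polarG n)) (∑ l ∈ S, cyc (2^n) l)) ≥
      wt (polarG n i) := by
  classical
  let pv : Polynomial (ZMod 2) := ∑ j : Fin (2^n), Polynomial.C (v j) * Polynomial.X^(j:ℕ)
  let pT : Polynomial (ZMod 2) := ∑ l ∈ S, (1 + Polynomial.X : Polynomial (ZMod 2))^l
  let P : Polynomial (ZMod 2) := pv * pT
  let v'' : Fin (2^n) → ZMod 2 := fun k => P.coeff k.val
  have hvec : Matrix.vecMul (Matrix.vecMul v (polarG n)) (∑ l ∈ S, cyc (2^n) l)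
      = Matrix.vecMul v'' (polarG n) := by
    have h1 : Matrix.vecMul v (polarG n)
        = fun k => (Polynomial.aeval (Stmt9Aux.Y n) pv) (Stmt9Aux.z n) k := by
      rw [Stmt9Aux.vecMul_G, Stmt9Aux.sum_smul_eq_aeval]
    have h2 : Matrix.vecMul (fun k => (Polynomial.aeval (Stmt9Aux.Y n) pv) (Stmt9Aux.z n) k)
          (∑ l ∈ S, cyc (2^n) l)
        = fun k => ((Polynomial.aeval (Stmt9Aux.Y n) pv) * (∑ l ∈ S, cyc (2^n) l))
            (Stmt9Aux.z n) k := by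
      funext k
      rw [Stmt9Aux.vecMul_apply', Matrix.mul_apply]
    have h3 : Polynomial.aeval (Stmt9Aux.Y n) P
        = ∑ j : Fin (2^n), v'' j • (Stmt9Aux.Y n)^(j:ℕ) := Stmt9Aux.aeval_trunc n P
    rw [h1, h2, Stmt9Aux.T_eq, ← _root_.map_mul]
    rw [Stmt9Aux.vecMul_G n v'', h3]
  rw [hvec]
  have hT0 : pT.coeff 0 = 1 := Stmt9Aux.coeff_pT_zero S hodd
  have hv''first : ∀ j : Fin (2^n), j < i → v'' j = 0 := by
    intro j hj
    show P.coeff j.val = 0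
    rw [Polynomial.coeff_mul]
    apply Finset.sum_eq_zero
    rintro ⟨a, b⟩ hab
    rw [Finset.HasAntidiagonal.mem_antidiagonal] at hab
    have ha : a < 2^n := by
      have := j.isLt
      omega
    have ha2 : a < i.val := by
      rw [Fin.lt_def] at hj
      omega
    have hz : pv.coeff a = 0 := by
      rw [Stmt9Aux.coeff_pv n v a ha]
      exact hfirst ⟨a, ha⟩ (by rw [Fin.lt_def]; exact ha2)
    simp only [hz, zero_mul]
  have hv''i : v'' i ≠ 0 := by
    show P.coeff i.val ≠ 0
    rw [Polynomial.coeff_mul]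
    rw [Finset.sum_eq_single ((i.val, 0) : ℕ × ℕ)]
    · rw [Stmt9Aux.coeff_pv n v i.val i.isLt, hT0, mul_one]
      have : (⟨i.val, i.isLt⟩ : Fin (2^n)) = i := Fin.ext rfl
      rw [this]
      exact hvi
    · rintro ⟨a, b⟩ hab hne
      rw [Finset.HasAntidiagonal.mem_antidiagonal] at hab
      have ha2 : a < i.val := by
        rcases Nat.lt_or_ge a i.val with h | h
        · exact h
        · exfalso
          apply hne
          have : a = i.val := by omega
          subst this
          have : b = 0 := by omega
          subst this
          rfl
      have ha : a < 2^n := lt_trans ha2 i.isLt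
      have hz : pv.coeff a = 0 := by
        rw [Stmt9Aux.coeff_pv n v a ha]
        exact hfirst ⟨a, ha⟩ (by rw [Fin.lt_def]; exact ha2)
      rw [hz, zero_mul]
    · intro hmem
      exact absurd (Finset.HasAntidiagonal.mem_antidiagonal.mpr (Nat.add_zero i.val)) hmem
  exact Stmt9Aux.key n v'' i hv''i hv''first
end

section
/- Let G_n = F^{⊗n}, N = 2^n, and let v be a nonzero binary vector of length N whose first nonzero entry is in position i. For any N×N upper-triangular Toeplitz matrix T_N over 𝔽₂ with ones on the main diagonal, w(v T_N G_n) ≥ w(g_i), where g_i is the i-th row of G_n. -/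
/-- The upper-triangular Toeplitz matrix determined by its first row `c`. -/
def toepT {N : ℕ} (c : Fin N → ZMod 2) : Matrix (Fin N) (Fin N) (ZMod 2) :=
  Matrix.of fun i j =>
    if h : i.val ≤ j.val then c ⟨j.val - i.val, by omega⟩ else 0

namespace Stmt10Aux

lemma subset_iff (x y : ℕ) : x &&& y = x ↔ ∀ p, x.testBit p = true → y.testBit p = true := by
  constructor
  · intro h p hp
    have h2 := congrArg (Nat.testBit · p) h
    simp only [Nat.testBit_and, hp, Bool.true_and] at h2
    exact h2
  · intro h
    apply Nat.eq_of_testBit_eq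
    intro p
    rw [Nat.testBit_and]
    cases hx : x.testBit p
    · simp
    · simp [h p hx]

lemma and_zero_iff (x y : ℕ) : x &&& y = 0 ↔ ∀ p, x.testBit p = true → y.testBit p = false := by
  constructor
  · intro h p hp
    have h2 := congrArg (Nat.testBit · p) h
    simp only [Nat.testBit_and, hp, Nat.zero_testBit, Bool.true_and] at h2
    exact h2
  · intro h
    apply Nat.eq_of_testBit_eq
    intro p
    rw [Nat.testBit_and, Nat.zero_testBit]
    cases hx : x.testBit p
    · simp
    · simp [h p hx]

lemma subset_le {x y : ℕ} (h : x &&& y = x) : x ≤ y := h ▸ Nat.and_le_right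

lemma testBit_lt {x n b : ℕ} (hx : x < 2^n) (hb : x.testBit b = true) : b < n := by
  by_contra h
  push_neg at h
  have : x < 2^b := lt_of_lt_of_le hx (Nat.pow_le_pow_right (by norm_num) h)
  rw [Nat.testBit_lt_two_pow this] at hb
  exact Bool.false_ne_true hb

lemma exists_testBit {m : ℕ} (hm : m ≠ 0) : ∃ b, m.testBit b = true := by
  by_contra h
  push_neg at h
  exact hm (Nat.eq_of_testBit_eq fun p => by simp [h p, Nat.zero_testBit])

lemma or_and_right (a b k : ℕ) : (a ||| b) &&& k = (a &&& k) ||| (b &&& k) :=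
  Nat.eq_of_testBit_eq fun p => by
    simp only [Nat.testBit_and, Nat.testBit_or]
    cases a.testBit p <;> cases b.testBit p <;> cases k.testBit p <;> rfl

lemma or_subset_iff (a b k : ℕ) :
    (a ||| b) &&& k = a ||| b ↔ (a &&& k = a ∧ b &&& k = b) := by
  simp only [subset_iff, Nat.testBit_or]
  constructor
  · intro h
    constructor <;> intro p hp
    · exact h p (by simp [hp])
    · exact h p (by simp [hp])
  · rintro ⟨h1, h2⟩ p hp
    rcases Bool.or_eq_true_iff.mp hp with h | h
    · exact h1 p h
    · exact h2 p h

/-- Parity of the number of submasks of `m` inside `Fin (2^n)`. -/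
lemma parity (n m : ℕ) (hm : m < 2^n) :
    (∑ r ∈ Finset.univ.filter (fun r : Fin (2^n) => r.val &&& m = r.val), (1 : ZMod 2))
      = if m = 0 then 1 else 0 := by
  by_cases h0 : m = 0
  · subst h0
    have : (Finset.univ.filter (fun r : Fin (2^n) => r.val &&& 0 = r.val))
        = {⟨0, Nat.two_pow_pos n⟩} := by
      ext r
      simp only [Finset.mem_filter, Finset.mem_univ, true_and, Finset.mem_singleton,
        Nat.and_zero]
      constructor
      · intro h; exact Fin.ext h.symm
      · intro h; subst h; rfl
    rw [this]; simp
  · rw [if_neg h0]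
    obtain ⟨b, hb⟩ := exists_testBit h0
    have hbn : b < n := testBit_lt hm hb
    have h2b : 2^b < 2^n := Nat.pow_lt_pow_right (by norm_num) hbn
    refine Finset.sum_involution
      (fun r _ => ⟨r.val ^^^ 2^b, Nat.xor_lt_two_pow r.isLt h2b⟩)
      (fun a ha => ?_) (fun a ha _ hfix => ?_) (fun a ha => ?_) (fun a ha => ?_)
    · decide
    · have h1 : a.val ^^^ 2^b = a.val := congrArg Fin.val hfix
      have h2 : (2:ℕ)^b = 0 := by
        have h3 := congrArg (fun x => a.val ^^^ x) h1
        simpa [← Nat.xor_assoc, Nat.xor_self] using h3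
      exact (Nat.two_pow_pos b).ne' h2
    · simp only [Finset.mem_filter, Finset.mem_univ, true_and] at ha ⊢
      rw [subset_iff] at ha ⊢
      intro p hp
      rw [Nat.testBit_xor] at hp
      by_cases hpb : p = b
      · subst hpb; exact hb
      · have hz : (2^b).testBit p = false := by
          rw [Nat.testBit_two_pow]
          simp [Ne.symm hpb]
        rw [hz, Bool.xor_false] at hp
        exact ha p hp
    · apply Fin.ext
      simp [Nat.xor_xor_cancel_right]

/-- `r ⊆ complement of i` and `r ⊆ k` iff `r ⊆ k &&& (mask ^^^ i)`. -/
lemma cond_equiv (n : ℕ) (i k r : ℕ) (hr : r < 2^n) :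
    (r &&& i = 0 ∧ r &&& k = r) ↔ r &&& (k &&& ((2^n - 1) ^^^ i)) = r := by
  rw [and_zero_iff, subset_iff, subset_iff]
  constructor
  · rintro ⟨h1, h2⟩ p hp
    have hpn : p < n := testBit_lt hr hp
    simp [Nat.testBit_and, Nat.testBit_xor, Nat.testBit_two_pow_sub_one,
      h2 p hp, h1 p hp, hpn]
  · intro h
    constructor <;> intro p hp <;>
    · have := h p hp
      have hpn : p < n := testBit_lt hr hp
      simp [Nat.testBit_and, Nat.testBit_xor, Nat.testBit_two_pow_sub_one, hpn] at this
      simp [this.1, this.2]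

lemma m_zero_iff (n : ℕ) (i k : ℕ) (hk : k < 2^n) :
    k &&& ((2^n - 1) ^^^ i) = 0 ↔ k &&& i = k := by
  rw [and_zero_iff, subset_iff]
  constructor
  · intro h p hp
    have hpn : p < n := testBit_lt hk hp
    have := h p hp
    simp [Nat.testBit_xor, Nat.testBit_two_pow_sub_one, hpn] at this
    exact this
  · intro h p hp
    have hpn : p < n := testBit_lt hk hp
    simp [Nat.testBit_xor, Nat.testBit_two_pow_sub_one, hpn, h p hp]

end Stmt10Aux

open Stmt10Aux in
/-- If the first nonzero entry of `v` is in position `i`, then for any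
upper-triangular Toeplitz `T_N` with unit diagonal, `w(v T_N G_n) ≥ w(g_i)`. -/
theorem stmt10 (n : ℕ) (v : Fin (2^n) → ZMod 2) (i : Fin (2^n))
    (hvi : v i ≠ 0) (hfirst : ∀ j : Fin (2^n), j < i → v j = 0)
    (c : Fin (2^n) → ZMod 2) (hc : c ⟨0, Nat.two_pow_pos n⟩ = 1) :
    wt (Matrix.vecMul (Matrix.vecMul v (toepT c)) (polarG n)) ≥
      wt (polarG n i) := by
  set u : Fin (2^n) → ZMod 2 := Matrix.vecMul v (toepT c) with hu
  set w : Fin (2^n) → ZMod 2 := Matrix.vecMul u (polarG n) with hw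
  -- Step A: u i = v i and u j = 0 for j < i
  have hui : u i = v i := by
    rw [hu, Matrix.vecMul, dotProduct]
    rw [Finset.sum_eq_single i]
    · simp only [toepT, Matrix.of_apply, le_refl, dif_pos, Nat.sub_self, hc, mul_one]
    · intro k _ hk
      by_cases hki : k.val ≤ i.val
      · have hlt : k < i := lt_of_le_of_ne (Fin.le_def.mpr hki) hk
        simp [hfirst k hlt]
      · simp only [toepT, Matrix.of_apply, dif_neg hki, mul_zero]
    · simp
  have hult : ∀ j : Fin (2^n), j < i → u j = 0 := by
    intro j hj
    rw [hu, Matrix.vecMul, dotProduct]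
    apply Finset.sum_eq_zero
    intro k _
    by_cases hkj : k.val ≤ j.val
    · have hlt : k < i := lt_of_le_of_lt (Fin.le_def.mpr hkj) hj
      simp [hfirst k hlt]
    · simp only [toepT, Matrix.of_apply, dif_neg hkj, mul_zero]
  -- Key existence: for every submask t of i there is j with j &&& i = t in supp(w)
  have key : ∀ t : Fin (2^n), ∃ j : Fin (2^n),
      t.val &&& i.val = t.val → (j.val &&& i.val = t.val ∧ w j ≠ 0) := by
    intro t
    by_cases ht : t.val &&& i.val = t.val
    swap
    · exact ⟨t, fun h => absurd h ht⟩
    by_contra hcon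
    push_neg at hcon
    have hcon' : ∀ j : Fin (2^n), j.val &&& i.val = t.val → w j = 0 :=
      fun j hj => (hcon j).2 hj
    set R : Finset (Fin (2^n)) :=
      Finset.univ.filter (fun r : Fin (2^n) => r.val &&& i.val = 0) with hR
    have hor : ∀ r : Fin (2^n), t.val ||| r.val < 2^n :=
      fun r => Nat.or_lt_two_pow t.isLt r.isLt
    have hS0 : (∑ r ∈ R, w ⟨t.val ||| r.val, hor r⟩) = 0 := by
      apply Finset.sum_eq_zero
      intro r hr
      rw [hR, Finset.mem_filter] at hr
      apply hcon'
      show (t.val ||| r.val) &&& i.val = t.val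
      rw [Stmt10Aux.or_and_right, ht, hr.2, Nat.or_zero]
    have inner : ∀ k : Fin (2^n),
        (∑ r ∈ R, polarG n k ⟨t.val ||| r.val, hor r⟩)
          = if t.val &&& k.val = t.val ∧ k.val &&& i.val = k.val then 1 else 0 := by
      intro k
      by_cases htk : t.val &&& k.val = t.val
      · have step : ∀ r ∈ R, polarG n k ⟨t.val ||| r.val, hor r⟩
            = if r.val &&& k.val = r.val then 1 else 0 := by
          intro r _
          simp only [polarG, Matrix.of_apply]
          by_cases hrk : r.val &&& k.val = r.val
          · rw [if_pos ((or_subset_iff t.val r.val k.val).mpr ⟨htk, hrk⟩), if_pos hrk]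
          · rw [if_neg (fun hcond => hrk ((or_subset_iff t.val r.val k.val).mp hcond).2),
              if_neg hrk]
        rw [Finset.sum_congr rfl step]
        have hm : k.val &&& ((2^n - 1) ^^^ i.val) < 2^n :=
          lt_of_le_of_lt Nat.and_le_left k.isLt
        have hfilt : R.filter (fun r : Fin (2^n) => r.val &&& k.val = r.val)
            = Finset.univ.filter
              (fun r : Fin (2^n) => r.val &&& (k.val &&& ((2^n - 1) ^^^ i.val)) = r.val) := by
          ext r
          simp only [hR, Finset.mem_filter, Finset.mem_univ, true_and, and_assoc]
          exact cond_equiv n i.val k.val r.val r.isLt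
        calc (∑ r ∈ R, if r.val &&& k.val = r.val then (1:ZMod 2) else 0)
            = ∑ r ∈ R.filter (fun r : Fin (2^n) => r.val &&& k.val = r.val), (1:ZMod 2) :=
              (Finset.sum_filter _ _).symm
          _ = if k.val &&& ((2^n - 1) ^^^ i.val) = 0 then 1 else 0 := by
              rw [hfilt]; exact parity n _ hm
          _ = if t.val &&& k.val = t.val ∧ k.val &&& i.val = k.val then 1 else 0 := by
              simp only [m_zero_iff n i.val k.val k.isLt, htk, true_and]
      · rw [if_neg (fun h => htk h.1)]
        apply Finset.sum_eq_zero
        intro r _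
        simp only [polarG, Matrix.of_apply]
        rw [if_neg (fun hcond => htk ((or_subset_iff t.val r.val k.val).mp hcond).1)]
    have hSeq : (∑ r ∈ R, w ⟨t.val ||| r.val, hor r⟩) = u i := by
      calc (∑ r ∈ R, w ⟨t.val ||| r.val, hor r⟩)
          = ∑ r ∈ R, ∑ k : Fin (2^n), u k * polarG n k ⟨t.val ||| r.val, hor r⟩ :=
            Finset.sum_congr rfl (fun r _ => by rw [hw, Matrix.vecMul, dotProduct])
        _ = ∑ k : Fin (2^n), ∑ r ∈ R, u k * polarG n k ⟨t.val ||| r.val, hor r⟩ :=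
            Finset.sum_comm
        _ = ∑ k : Fin (2^n), u k * ∑ r ∈ R, polarG n k ⟨t.val ||| r.val, hor r⟩ :=
            Finset.sum_congr rfl (fun k _ => (Finset.mul_sum _ _ _).symm)
        _ = ∑ k : Fin (2^n), u k *
              if t.val &&& k.val = t.val ∧ k.val &&& i.val = k.val then 1 else 0 :=
            Finset.sum_congr rfl (fun k _ => by rw [inner k])
        _ = u i := by
            rw [Finset.sum_eq_single i]
            · simp [ht, Nat.and_self]
            · intro k _ hk
              by_cases hcond : t.val &&& k.val = t.val ∧ k.val &&& i.val = k.val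
              · have hki : k < i :=
                  lt_of_le_of_ne (Fin.le_def.mpr (subset_le hcond.2)) hk
                simp [hult k hki]
              · simp [hcond]
            · simp
    exact hvi (by rw [← hui, ← hSeq, hS0])
  -- conclude by an injection from submasks of i into supp(w)
  choose f hf using key
  have hcard : wt (polarG n i)
      = (Finset.univ.filter (fun t : Fin (2^n) => t.val &&& i.val = t.val)).card := by
    rw [wt]
    congr 1
    apply Finset.filter_congr
    intro j _
    simp only [polarG, Matrix.of_apply]
    by_cases h : j.val &&& i.val = j.val <;> simp [h]
  rw [ge_iff_le, hcard, wt]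
  apply Finset.card_le_card_of_injOn f
  · intro a ha
    rw [Finset.mem_coe, Finset.mem_filter] at ha ⊢
    exact ⟨Finset.mem_univ _, (hf a ha.2).2⟩
  · intro a ha b hb heq
    rw [Finset.mem_coe, Finset.mem_filter] at ha hb
    apply Fin.ext
    rw [← (hf a ha.2).1, ← (hf b hb.2).1, heq]
end

section
/- Let G_n = F^{⊗n}, N = 2^n, A ⊆ {1,…,N} a nonempty index set, and T_N an upper-triangular Toeplitz matrix over 𝔽₂ with unit diagonal. The minimum distance of the PAC code {v T_N G_n : v ∈ 𝔽₂^N, supp(v) ⊆ A, v ≠ 0} is at least the minimum distance of the polar code {v G_n : v ∈ 𝔽₂^N, supp(v) ⊆ A, v ≠ 0}, which equals min_{i ∈ A} w(g_i). -/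
open Finset

namespace Stmt11Aux

lemma testBit_pow_add {n x : ℕ} (hx : x < 2^n) (k : ℕ) :
    (2^n + x).testBit k = ((k == n) || x.testBit k) := by
  rcases lt_trichotomy k n with h | rfl | h
  · rw [Nat.testBit_two_pow_add_gt h]
    simp [Nat.ne_of_lt h]
  · simp [Nat.testBit_two_pow_add_eq, Nat.testBit_lt_two_pow hx]
  · have hp : (2:ℕ)^(n+1) ≤ 2^k := Nat.pow_le_pow_right (by norm_num) h
    have hq : (2:ℕ)^(n+1) = 2^n + 2^n := by ring
    have h1 : (2^n + x).testBit k = false := Nat.testBit_lt_two_pow (by omega)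
    have h2 : x.testBit k = false := Nat.testBit_lt_two_pow (by omega)
    simp [h1, h2, Nat.ne_of_gt h]

lemma and_pow_add_right {n i j : ℕ} (hi : i < 2^n) (hj : j < 2^n) :
    j &&& (2^n + i) = j &&& i := by
  apply Nat.eq_of_testBit_eq; intro k
  rw [Nat.testBit_and, Nat.testBit_and, testBit_pow_add hi]
  by_cases hk : k = n
  · subst hk; rw [Nat.testBit_lt_two_pow hj]; cases i.testBit k <;> simp
  · have hb : (k == n) = false := beq_eq_false_iff_ne.mpr hk
    rw [hb, Bool.false_or]

lemma and_pow_add_both {n i j : ℕ} (hi : i < 2^n) (hj : j < 2^n) :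
    (2^n + j) &&& (2^n + i) = 2^n + (j &&& i) := by
  have hji : j &&& i < 2^n := lt_of_le_of_lt Nat.and_le_left hj
  apply Nat.eq_of_testBit_eq; intro k
  rw [Nat.testBit_and, testBit_pow_add hi, testBit_pow_add hj,
    testBit_pow_add hji, Nat.testBit_and]
  cases h : (k == n) <;> simp [h]

/-- `(u G)_j` over ℕ indices. -/
def En (n : ℕ) (u : ℕ → ZMod 2) (j : ℕ) : ZMod 2 :=
  ∑ i ∈ Finset.range (2^n), if j &&& i = j then u i else 0

def wtn (n : ℕ) (x : ℕ → ZMod 2) : ℕ :=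
  ∑ j ∈ Finset.range (2^n), if x j ≠ 0 then 1 else 0

def rwt (n i : ℕ) : ℕ :=
  ∑ j ∈ Finset.range (2^n), if j &&& i = j then 1 else 0

lemma pow_succ_eq (n : ℕ) : (2:ℕ)^(n+1) = 2^n + 2^n := by ring

lemma En_lower (n : ℕ) (u : ℕ → ZMod 2) {j : ℕ} (hj : j < 2^n) :
    En (n+1) u j = En n u j + En n (fun i => u (2^n + i)) j := by
  unfold En
  rw [pow_succ_eq, Finset.sum_range_add]
  congr 1
  refine Finset.sum_congr rfl fun i hi => ?_
  rw [mem_range] at hi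
  rw [and_pow_add_right hi hj]

lemma En_upper (n : ℕ) (u : ℕ → ZMod 2) {j : ℕ} (hj : j < 2^n) :
    En (n+1) u (2^n + j) = En n (fun i => u (2^n + i)) j := by
  unfold En
  rw [pow_succ_eq, Finset.sum_range_add]
  have h1 : (∑ i ∈ range (2^n), if (2^n+j) &&& i = 2^n+j then u i else 0) = 0 := by
    refine Finset.sum_eq_zero fun i hi => ?_
    rw [mem_range] at hi
    have h := Nat.and_le_right (n := 2^n+j) (m := i)
    rw [if_neg (by omega)]
  rw [h1, zero_add]
  refine Finset.sum_congr rfl fun i hi => ?_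
  rw [mem_range] at hi
  rw [and_pow_add_both hi hj]
  simp [add_right_inj]

lemma wtn_succ (n : ℕ) (x : ℕ → ZMod 2) :
    wtn (n+1) x = wtn n x + wtn n (fun j => x (2^n + j)) := by
  unfold wtn; rw [pow_succ_eq, Finset.sum_range_add]

lemma wtn_congr {n : ℕ} {x y : ℕ → ZMod 2} (h : ∀ j, j < 2^n → x j = y j) :
    wtn n x = wtn n y := by
  unfold wtn
  refine Finset.sum_congr rfl fun j hj => ?_
  rw [mem_range] at hj
  rw [h j hj]

lemma wtn_triangle (n : ℕ) (a b : ℕ → ZMod 2) :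
    wtn n a ≤ wtn n (fun j => a j + b j) + wtn n b := by
  unfold wtn
  rw [← Finset.sum_add_distrib]
  refine Finset.sum_le_sum fun j _ => ?_
  by_cases ha : a j = 0 <;> by_cases hb : b j = 0 <;> simp [ha, hb]

lemma rwt_lower (n : ℕ) {i : ℕ} (hi : i < 2^n) : rwt (n+1) i = rwt n i := by
  unfold rwt
  rw [pow_succ_eq, Finset.sum_range_add]
  have h1 : (∑ j ∈ range (2^n), if (2^n+j) &&& i = 2^n+j then 1 else 0) = 0 := by
    refine Finset.sum_eq_zero fun j hj => ?_
    have h := Nat.and_le_right (n := 2^n+j) (m := i)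
    rw [if_neg (by omega)]
  rw [h1, add_zero]

lemma rwt_upper (n : ℕ) {i : ℕ} (hi : i < 2^n) : rwt (n+1) (2^n + i) = 2 * rwt n i := by
  unfold rwt
  rw [pow_succ_eq, Finset.sum_range_add]
  have h1 : (∑ j ∈ range (2^n), if j &&& (2^n+i) = j then 1 else 0)
      = ∑ j ∈ range (2^n), if j &&& i = j then (1:ℕ) else 0 := by
    refine Finset.sum_congr rfl fun j hj => ?_
    rw [mem_range] at hj
    rw [and_pow_add_right hi hj]
  have h2 : (∑ j ∈ range (2^n), if (2^n+j) &&& (2^n+i) = 2^n+j then 1 else 0)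
      = ∑ j ∈ range (2^n), if j &&& i = j then (1:ℕ) else 0 := by
    refine Finset.sum_congr rfl fun j hj => ?_
    rw [mem_range] at hj
    rw [and_pow_add_both hi hj]
    simp [add_right_inj]
  rw [h1, h2]; ring

/-- Core lemma: the weight of `u G` is at least the weight of the row of `G`
indexed by the minimal support element of `u`. -/
lemma core : ∀ (n : ℕ) (u : ℕ → ZMod 2) (i0 : ℕ), i0 < 2^n → u i0 ≠ 0 →
    (∀ i, i < i0 → u i = 0) → rwt n i0 ≤ wtn n (En n u) := by
  intro n
  induction n with
  | zero =>
    intro u i0 h0 hne _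
    have : i0 = 0 := by simpa using Nat.lt_one_iff.mp h0
    subst this
    simp [rwt, wtn, En, hne]
  | succ n ih =>
    intro u i0 h0 hne hmin
    rw [wtn_succ]
    by_cases hc : i0 < 2^n
    · rw [rwt_lower n hc]
      have hB : wtn n (fun j => En (n+1) u (2^n + j))
          = wtn n (En n (fun i => u (2^n + i))) :=
        wtn_congr fun j hj => En_upper n u hj
      have hA : wtn n (En (n+1) u)
          = wtn n (fun j => En n u j + En n (fun i => u (2^n + i)) j) :=
        wtn_congr fun j hj => En_lower n u hj
      rw [hA, hB]
      calc rwt n i0 ≤ wtn n (En n u) := ih u i0 hc hne hmin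
        _ ≤ _ := wtn_triangle n (En n u) (En n (fun i => u (2^n + i)))
    · have h2 : (2:ℕ)^(n+1) = 2^n + 2^n := by ring
      set i1 := i0 - 2^n with hi1
      have hi1lt : i1 < 2^n := by omega
      have hi0 : i0 = 2^n + i1 := by omega
      have hAz : ∀ j, j < 2^n → En n u j = 0 := fun j _ =>
        Finset.sum_eq_zero fun i hi => by
          rw [mem_range] at hi
          rw [hmin i (by omega)]
          simp
      have hB : wtn n (fun j => En (n+1) u (2^n + j))
          = wtn n (En n (fun i => u (2^n + i))) :=
        wtn_congr fun j hj => En_upper n u hj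
      have hA : wtn n (En (n+1) u)
          = wtn n (En n (fun i => u (2^n + i))) :=
        wtn_congr fun j hj => by
          rw [En_lower n u hj, hAz j hj, zero_add]
      have hIH : rwt n i1 ≤ wtn n (En n (fun i => u (2^n + i))) := by
        refine ih _ i1 hi1lt ?_ ?_
        · rw [← hi0]; exact hne
        · intro i hi; exact hmin _ (by omega)
      rw [hi0, rwt_upper n hi1lt, hA, hB]
      omega

/-- Extension of a `Fin`-indexed vector to ℕ. -/
def ext {N : ℕ} (v : Fin N → ZMod 2) : ℕ → ZMod 2 :=
  fun i => if h : i < N then v ⟨i, h⟩ else 0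

lemma ext_val {N : ℕ} (v : Fin N → ZMod 2) (i : Fin N) : ext v i.val = v i := by
  simp [ext, i.isLt]

lemma wt_eq_wtn (n : ℕ) (x : Fin (2^n) → ZMod 2) : wt x = wtn n (ext x) := by
  unfold wt wtn
  rw [Finset.card_filter]
  rw [← Fin.sum_univ_eq_sum_range (fun j => if ext x j ≠ 0 then 1 else 0) (2^n)]
  refine Finset.sum_congr rfl fun j _ => ?_
  rw [ext_val]

lemma vecMul_polar_eq (n : ℕ) (v : Fin (2^n) → ZMod 2) (j : Fin (2^n)) :
    Matrix.vecMul v (polarG n) j = En n (ext v) j.val := by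
  unfold En
  rw [← Fin.sum_univ_eq_sum_range (fun i => if j.val &&& i = j.val then ext v i else 0) (2^n)]
  unfold Matrix.vecMul dotProduct polarG
  refine Finset.sum_congr rfl fun i _ => ?_
  rw [ext_val]
  simp only [Matrix.of_apply, mul_ite, mul_one, mul_zero]

lemma wt_vecMul_polar (n : ℕ) (v : Fin (2^n) → ZMod 2) :
    wt (Matrix.vecMul v (polarG n)) = wtn n (En n (ext v)) := by
  rw [wt_eq_wtn]
  refine wtn_congr fun j hj => ?_
  show ext (Matrix.vecMul v (polarG n)) ((⟨j, hj⟩ : Fin (2^n)) : ℕ) = _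
  rw [ext_val, vecMul_polar_eq]

lemma wt_row (n : ℕ) (i : Fin (2^n)) : wt (polarG n i) = rwt n i.val := by
  rw [wt_eq_wtn]
  unfold wtn rwt
  refine Finset.sum_congr rfl fun j hj => ?_
  rw [mem_range] at hj
  show (if ext (polarG n i) ((⟨j, hj⟩ : Fin (2^n)) : ℕ) ≠ 0 then 1 else 0) = _
  rw [ext_val]
  unfold polarG
  by_cases h : j &&& i.val = j <;> simp [h]

/-- Key lemma in `Fin` form. -/
lemma key (n : ℕ) (v : Fin (2^n) → ZMod 2) (i0 : Fin (2^n)) (hne : v i0 ≠ 0)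
    (hmin : ∀ i, i < i0 → v i = 0) :
    wt (polarG n i0) ≤ wt (Matrix.vecMul v (polarG n)) := by
  rw [wt_row, wt_vecMul_polar]
  refine core n (ext v) i0.val i0.isLt ?_ ?_
  · rw [ext_val]; exact hne
  · intro i hi
    have hilt : i < 2^n := lt_trans hi i0.isLt
    show ext v ((⟨i, hilt⟩ : Fin (2^n)) : ℕ) = 0
    rw [ext_val]
    exact hmin _ hi

/-- `v T` has the same minimal support index as `v`. -/
lemma toep_min (n : ℕ) (c : Fin (2^n) → ZMod 2) (hc : c ⟨0, Nat.two_pow_pos n⟩ = 1)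
    (v : Fin (2^n) → ZMod 2) (i0 : Fin (2^n)) (hne : v i0 ≠ 0)
    (hmin : ∀ i, i < i0 → v i = 0) :
    Matrix.vecMul v (toepT c) i0 ≠ 0 ∧ ∀ j, j < i0 → Matrix.vecMul v (toepT c) j = 0 := by
  constructor
  · unfold Matrix.vecMul dotProduct
    rw [Finset.sum_eq_single i0]
    · simp only [toepT, Matrix.of_apply]
      rw [dif_pos (le_refl i0.val)]
      have h0 : (⟨i0.val - i0.val, by omega⟩ : Fin (2^n)) = ⟨0, Nat.two_pow_pos n⟩ := by
        ext; simp
      rw [h0, hc, mul_one]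
      exact hne
    · intro i _ hne2
      by_cases hv : v i = 0
      · rw [hv, zero_mul]
      · have : i0 ≤ i := le_of_not_gt fun h => hv (hmin i h)
        have hlt : i0 < i := lt_of_le_of_ne this (Ne.symm hne2)
        simp only [toepT, Matrix.of_apply]
        rw [dif_neg (by exact not_le.mpr hlt), mul_zero]
    · intro h; exact absurd (Finset.mem_univ i0) h
  · intro j hj
    unfold Matrix.vecMul dotProduct
    refine Finset.sum_eq_zero fun i _ => ?_
    by_cases hv : v i = 0
    · rw [hv, zero_mul]
    · have : i0 ≤ i := le_of_not_gt fun h => hv (hmin i h)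
      have : j.val < i.val := lt_of_lt_of_le hj this
      simp only [toepT, Matrix.of_apply]
      rw [dif_neg (by omega), mul_zero]

lemma single_vecMul_polar (n : ℕ) (i : Fin (2^n)) :
    Matrix.vecMul (Pi.single i 1) (polarG n) = polarG n i := by
  funext j
  unfold Matrix.vecMul dotProduct
  rw [Finset.sum_eq_single i]
  · rw [Pi.single_eq_same, one_mul]
  · intro k _ hk; rw [Pi.single_eq_of_ne hk, zero_mul]
  · intro h; exact absurd (Finset.mem_univ i) h

/-- minimal support element of a nonzero vector. -/
lemma exists_min {N : ℕ} (v : Fin N → ZMod 2) (hv : v ≠ 0) :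
    ∃ i0, v i0 ≠ 0 ∧ ∀ i, i < i0 → v i = 0 := by
  have hs : (Finset.univ.filter fun i => v i ≠ 0).Nonempty := by
    rw [Finset.filter_nonempty_iff]
    obtain ⟨i, hi⟩ := Function.ne_iff.mp hv
    exact ⟨i, Finset.mem_univ i, hi⟩
  refine ⟨(Finset.univ.filter fun i => v i ≠ 0).min' hs, ?_, ?_⟩
  · have := Finset.min'_mem _ hs
    rw [Finset.mem_filter] at this
    exact this.2
  · intro i hi
    by_contra hvi
    have : (Finset.univ.filter fun i => v i ≠ 0).min' hs ≤ i :=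
      Finset.min'_le _ _ (Finset.mem_filter.mpr ⟨Finset.mem_univ i, hvi⟩)
    exact absurd hi (not_lt.mpr this)

end Stmt11Aux

open Stmt11Aux in
/-- The minimum distance of the PAC code `{v T_N G_n : supp(v) ⊆ A, v ≠ 0}` is at
least the minimum distance of the polar code `{v G_n : supp(v) ⊆ A, v ≠ 0}`, which
equals `min_{i ∈ A} w(g_i)`. -/
theorem stmt11 (n : ℕ) (A : Finset (Fin (2^n))) (hA : A.Nonempty)
    (c : Fin (2^n) → ZMod 2) (hc : c ⟨0, Nat.two_pow_pos n⟩ = 1) :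
    sInf {w : ℕ | ∃ v : Fin (2^n) → ZMod 2, v ≠ 0 ∧ (∀ j, v j ≠ 0 → j ∈ A) ∧
        w = wt (Matrix.vecMul (Matrix.vecMul v (toepT c)) (polarG n))} ≥
      sInf {w : ℕ | ∃ v : Fin (2^n) → ZMod 2, v ≠ 0 ∧ (∀ j, v j ≠ 0 → j ∈ A) ∧
        w = wt (Matrix.vecMul v (polarG n))} ∧
    sInf {w : ℕ | ∃ v : Fin (2^n) → ZMod 2, v ≠ 0 ∧ (∀ j, v j ≠ 0 → j ∈ A) ∧
        w = wt (Matrix.vecMul v (polarG n))} =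
      A.inf' hA fun i => wt (polarG n i) := by
  set P := {w : ℕ | ∃ v : Fin (2^n) → ZMod 2, v ≠ 0 ∧ (∀ j, v j ≠ 0 → j ∈ A) ∧
        w = wt (Matrix.vecMul v (polarG n))} with hP
  set Q := {w : ℕ | ∃ v : Fin (2^n) → ZMod 2, v ≠ 0 ∧ (∀ j, v j ≠ 0 → j ∈ A) ∧
        w = wt (Matrix.vecMul (Matrix.vecMul v (toepT c)) (polarG n))} with hQ
  -- membership producers
  have hsingle : ∀ i : Fin (2^n), (Pi.single i (1:ZMod 2) : Fin (2^n) → ZMod 2) ≠ 0 ∧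
      (∀ j, (Pi.single i (1:ZMod 2) : Fin (2^n) → ZMod 2) j ≠ 0 → j = i) := by
    intro i
    constructor
    · intro h
      have := congrFun h i
      rw [Pi.single_eq_same] at this
      exact one_ne_zero this
    · intro j hj
      by_contra hne
      exact hj (Pi.single_eq_of_ne hne 1)
  have hrowP : ∀ i ∈ A, wt (polarG n i) ∈ P := by
    intro i hi
    refine ⟨Pi.single i 1, (hsingle i).1, fun j hj => (hsingle i).2 j hj ▸ hi, ?_⟩
    rw [single_vecMul_polar]
  -- every element of P is ≥ inf'
  have hPlow : ∀ w ∈ P, A.inf' hA (fun i => wt (polarG n i)) ≤ w := by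
    rintro w ⟨v, hv, hsupp, rfl⟩
    obtain ⟨i0, hne, hmin⟩ := exists_min v hv
    have hi0A : i0 ∈ A := hsupp i0 hne
    calc A.inf' hA (fun i => wt (polarG n i)) ≤ wt (polarG n i0) :=
        Finset.inf'_le _ hi0A
      _ ≤ _ := key n v i0 hne hmin
  have hPne : P.Nonempty := by
    obtain ⟨i, hi⟩ := hA
    exact ⟨_, hrowP i hi⟩
  have hPeq : sInf P = A.inf' hA fun i => wt (polarG n i) := by
    apply le_antisymm
    · obtain ⟨i, hi, hieq⟩ := Finset.exists_mem_eq_inf' hA fun i => wt (polarG n i)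
      rw [hieq]
      exact Nat.sInf_le (hrowP i hi)
    · exact le_csInf hPne hPlow
  refine ⟨?_, hPeq⟩
  -- PAC part
  have hQne : Q.Nonempty := by
    obtain ⟨i, hi⟩ := hA
    refine ⟨wt (Matrix.vecMul (Matrix.vecMul (Pi.single i 1) (toepT c)) (polarG n)),
      Pi.single i 1, (hsingle i).1, fun j hj => (hsingle i).2 j hj ▸ hi, rfl⟩
  refine le_csInf hQne ?_
  rintro w ⟨v, hv, hsupp, rfl⟩
  obtain ⟨i0, hne, hmin⟩ := exists_min v hv
  have hi0A : i0 ∈ A := hsupp i0 hne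
  obtain ⟨hne', hmin'⟩ := toep_min n c hc v i0 hne hmin
  calc sInf P ≤ wt (polarG n i0) := Nat.sInf_le (hrowP i0 hi0A)
    _ ≤ _ := key n (Matrix.vecMul v (toepT c)) i0 hne' hmin'
end

section
/- For any binary vector u of length N = 2^n and any l with 1 ≤ l ≤ N−1, the Hamming weight of the doubled vector satisfies w((u, u) ∑_{l ∈ S} C_{2N}^l) = 2 w(u ∑_{l' ∈ S'} C_N^{l'}) whenever S ⊆ {1,…,2N−1} contains no pair of shifts congruent modulo N, where S' = {l mod N : l ∈ S}. -/
open Fin.NatCast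

lemma vecMul_sum' {M : ℕ} (x : Fin M → ZMod 2) (S : Finset ℕ)
    (A : ℕ → Matrix (Fin M) (Fin M) (ZMod 2)) (k : Fin M) :
    Matrix.vecMul x (∑ l ∈ S, A l) k = ∑ l ∈ S, Matrix.vecMul x (A l) k := by
  simp only [Matrix.vecMul, dotProduct, Matrix.sum_apply, Finset.mul_sum]
  rw [Finset.sum_comm]

lemma vecMul_cyc {M : ℕ} [NeZero M] (x : Fin M → ZMod 2) (l : ℕ) (k : Fin M) :
    Matrix.vecMul x (cyc M l) k = x (k - (l : Fin M)) := by
  simp only [Matrix.vecMul, dotProduct, cyc, Matrix.of_apply]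
  have hval : ∀ i : Fin M, (i + (l : Fin M)).val = (i.val + l) % M := by
    intro i; simp [Fin.add_def, Fin.val_natCast, Nat.add_mod_mod]
  have hcond : ∀ i : Fin M, ((i.val + l) % M = k.val) ↔ i = k - (l : Fin M) := by
    intro i
    rw [eq_sub_iff_add_eq, Fin.ext_iff, hval]
  calc (∑ i, x i * if (i.val + l) % M = k.val then 1 else 0)
      = ∑ i, if i = k - (l : Fin M) then x i else 0 := by
        apply Finset.sum_congr rfl; intro i _
        simp only [hcond i]; split <;> simp
    _ = x (k - (l : Fin M)) := by rw [Finset.sum_ite_eq' Finset.univ _ x]; simp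

lemma modkey (N j l : ℕ) (hN : 0 < N) :
    (N + N - l % (N + N) + j) % (N + N) % N = (N - l % N + j) % N := by
  have hdvd : N ∣ N + N := ⟨2, by ring⟩
  rw [Nat.mod_mod_of_dvd _ hdvd]
  have hab : l % (N + N) % N = l % N := Nat.mod_mod_of_dvd l hdvd
  have ha : l % (N + N) < N + N := Nat.mod_lt _ (by omega)
  have hb : l % N < N := Nat.mod_lt _ hN
  have h1 := Nat.div_add_mod (l % (N + N)) N
  have h3 : l % (N + N) / N < 2 := (Nat.div_lt_iff_lt_mul hN).2 (by omega)
  have hcase : l % (N + N) = l % N ∨ l % (N + N) = N + l % N := by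
    interval_cases h5 : l % (N + N) / N <;> omega
  rcases hcase with h | h
  · rw [h, show N + N - l % N + j = (N - l % N + j) + N by omega, Nat.add_mod_right]
  · rw [h, show N + N - (N + l % N) = N - l % N by omega]

/-- For `u` of length `N = 2^n` and `S ⊆ {1,…,2N−1}` containing no two shifts
congruent mod `N`, `w((u,u) ∑_{l∈S} C_{2N}^l) = 2 w(u ∑_{l'∈S'} C_N^{l'})` where
`S' = {l mod N : l ∈ S}`. -/
theorem stmt14 (n : ℕ) (u : Fin (2^n) → ZMod 2) (S : Finset ℕ)
    (hS : ∀ l ∈ S, 1 ≤ l ∧ l ≤ 2 * 2^n - 1)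
    (hpair : ∀ l ∈ S, ∀ l' ∈ S, l % 2^n = l' % 2^n → l = l') :
    wt (Matrix.vecMul (Fin.append u u) (∑ l ∈ S, cyc (2^n + 2^n) l)) =
      2 * wt (Matrix.vecMul u (∑ l' ∈ S.image (· % 2^n), cyc (2^n) l')) := by
  have hN : 0 < 2^n := by positivity
  haveI : NeZero (2^n) := ⟨hN.ne'⟩
  haveI : NeZero (2^n + 2^n) := ⟨by omega⟩
  have hwk : ∀ k : Fin (2^n),
      Matrix.vecMul u (∑ l' ∈ S.image (· % 2^n), cyc (2^n) l') k
        = ∑ l ∈ S, u (k - (l : Fin (2^n))) := by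
    intro k
    rw [vecMul_sum', Finset.sum_image (fun x hx y hy h => hpair x hx y hy h)]
    apply Finset.sum_congr rfl
    intro l _
    rw [vecMul_cyc]
    have hcast : ((l % 2^n : ℕ) : Fin (2^n)) = (l : Fin (2^n)) := by
      ext; simp only [Fin.val_natCast]; exact Nat.mod_mod_of_dvd l dvd_rfl
    rw [hcast]
  have happ : ∀ m : Fin (2^n + 2^n),
      Fin.append u u m = u ⟨m.val % 2^n, Nat.mod_lt _ hN⟩ := by
    intro m
    refine Fin.addCases (fun i => ?_) (fun i => ?_) m
    · rw [Fin.append_left]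
      congr 1
      ext
      simp only [Fin.coe_castAdd]
      exact (Nat.mod_eq_of_lt i.isLt).symm
    · rw [Fin.append_right]
      congr 1
      ext
      simp only [Fin.coe_natAdd]
      rw [Nat.add_mod_left]
      exact (Nat.mod_eq_of_lt i.isLt).symm
  have hkey : ∀ j : Fin (2^n + 2^n),
      Matrix.vecMul (Fin.append u u) (∑ l ∈ S, cyc (2^n + 2^n) l) j
        = Matrix.vecMul u (∑ l' ∈ S.image (· % 2^n), cyc (2^n) l')
            ⟨j.val % 2^n, Nat.mod_lt _ hN⟩ := by
    intro j
    rw [vecMul_sum', hwk]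
    apply Finset.sum_congr rfl
    intro l _
    rw [vecMul_cyc, happ]
    congr 1
    ext
    simp only [Fin.sub_def, Fin.val_natCast]
    rw [modkey (2^n) j.val l hN, Nat.add_mod_mod]
  have idx1 : ∀ i : Fin (2^n),
      (⟨(Fin.castAdd (2^n) i).val % 2^n, Nat.mod_lt _ hN⟩ : Fin (2^n)) = i := by
    intro i; ext; simp only [Fin.coe_castAdd]; exact Nat.mod_eq_of_lt i.isLt
  have idx2 : ∀ i : Fin (2^n),
      (⟨(Fin.natAdd (2^n) i).val % 2^n, Nat.mod_lt _ hN⟩ : Fin (2^n)) = i := by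
    intro i; ext; simp only [Fin.coe_natAdd]; rw [Nat.add_mod_left]
    exact Nat.mod_eq_of_lt i.isLt
  unfold wt
  rw [Finset.card_filter, Finset.card_filter, Fin.sum_univ_add]
  have s1 : ∑ i : Fin (2^n),
      (if Matrix.vecMul (Fin.append u u) (∑ l ∈ S, cyc (2^n + 2^n) l)
          (Fin.castAdd (2^n) i) ≠ 0 then 1 else 0)
      = ∑ i : Fin (2^n),
        (if Matrix.vecMul u (∑ l' ∈ S.image (· % 2^n), cyc (2^n) l') i ≠ 0 then (1:ℕ) else 0) :=
    Finset.sum_congr rfl (fun i _ => by rw [hkey, idx1])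
  have s2 : ∑ i : Fin (2^n),
      (if Matrix.vecMul (Fin.append u u) (∑ l ∈ S, cyc (2^n + 2^n) l)
          (Fin.natAdd (2^n) i) ≠ 0 then 1 else 0)
      = ∑ i : Fin (2^n),
        (if Matrix.vecMul u (∑ l' ∈ S.image (· % 2^n), cyc (2^n) l') i ≠ 0 then (1:ℕ) else 0) :=
    Finset.sum_congr rfl (fun i _ => by rw [hkey, idx2])
  rw [s1, s2]
  omega
end
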